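/- arXiv:1504.01690 — 5 statements merged into one kernel-verified Lean document; each statement's English description precedes it below -/
import Mathlib

section
/- Let P be positive definite, H ∈ ℝ^{N×L}, and a ∈ ℝ^L with some coordinate a_ℓ satisfying a_ℓ² > λ_max(I + P HᵀH). Then aᵀ(P⁻¹ + HᵀH)⁻¹ a ≥ P_{ℓℓ}, i.e. the minimal effective noise variance is at least the ℓ-th power. Equivalently, if aᵀ(P⁻¹ + HᵀH)⁻¹ a < P_{ℓℓ} then a_ℓ² ≤ λ_max(I + P HᵀH). -/
open Matrix
open scoped Pointwise

private lemma cs_psd {n : ℕ} {M : Matrix (Fin n) (Fin n) ℝ} (hM : M.PosSemidef)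
    (x y : Fin n → ℝ) :
    (x ⬝ᵥ M.mulVec y) ^ 2 ≤ (x ⬝ᵥ M.mulVec x) * (y ⬝ᵥ M.mulVec y) := by
  have hMt : Mᵀ = M := by
    have := hM.1
    simpa [Matrix.IsHermitian] using this
  have hsym : y ⬝ᵥ M.mulVec x = x ⬝ᵥ M.mulVec y := by
    rw [Matrix.dotProduct_mulVec, ← Matrix.mulVec_transpose, hMt, dotProduct_comm]
  have key : ∀ t : ℝ, 0 ≤ (y ⬝ᵥ M.mulVec y) * (t * t)
      + (2 * (x ⬝ᵥ M.mulVec y)) * t + (x ⬝ᵥ M.mulVec x) := by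
    intro t
    have h0 := hM.dotProduct_mulVec_nonneg (x + t • y)
    simp only [star_trivial] at h0
    have hexp : (x + t • y) ⬝ᵥ M.mulVec (x + t • y)
        = (y ⬝ᵥ M.mulVec y) * (t * t) + (2 * (x ⬝ᵥ M.mulVec y)) * t
          + (x ⬝ᵥ M.mulVec x) := by
      rw [Matrix.mulVec_add, Matrix.mulVec_smul]
      simp only [add_dotProduct, dotProduct_add, smul_dotProduct,
        dotProduct_smul, smul_eq_mul]
      rw [hsym]; ring
    linarith [hexp ▸ h0]
  have hdisc := discrim_le_zero key
  rw [discrim] at hdisc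
  nlinarith [hdisc]

theorem stmt_2 {L N : ℕ} (d : Fin L → ℝ) (hd : ∀ ℓ, 0 < d ℓ)
    (H : Matrix (Fin N) (Fin L) ℝ) (a : Fin L → ℝ) (ℓ : Fin L)
    (h : ∀ μ ∈ spectrum ℝ
        ((1 : Matrix (Fin L) (Fin L) ℝ) + Matrix.diagonal d * Hᵀ * H), (a ℓ) ^ 2 > μ) :
    a ⬝ᵥ (((Matrix.diagonal d)⁻¹ + Hᵀ * H)⁻¹).mulVec a ≥ d ℓ := by
  classical
  set D : Matrix (Fin L) (Fin L) ℝ := Matrix.diagonal d with hDdef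
  set B : Matrix (Fin L) (Fin L) ℝ := D⁻¹ + Hᵀ * H with hBdef
  have hDpd : D.PosDef := Matrix.posDef_diagonal_iff.mpr hd
  have hHtH : (Hᵀ * H).PosSemidef := by
    have := Matrix.posSemidef_conjTranspose_mul_self H
    simpa using this
  have hBpd : B.PosDef := hDpd.inv.add_posSemidef hHtH
  -- square root of D
  set s : Fin L → ℝ := fun i => Real.sqrt (d i) with hsdef
  have hs : ∀ i, 0 < s i := fun i => Real.sqrt_pos.mpr (hd i)
  set Dh : Matrix (Fin L) (Fin L) ℝ := Matrix.diagonal s with hDhdef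
  have hDhpd : Dh.PosDef := Matrix.posDef_diagonal_iff.mpr hs
  have hDhDh : Dh * Dh = D := by
    have hss : (fun i => s i * s i) = d := funext fun i => Real.mul_self_sqrt (hd i).le
    rw [hDhdef, hDdef, Matrix.diagonal_mul_diagonal, hss]
  set S : Matrix (Fin L) (Fin L) ℝ := Dh * B * Dh with hSdef
  -- the hypothesis matrix equals D * B, a conjugate of S
  have hDB : (1 : Matrix (Fin L) (Fin L) ℝ) + D * Hᵀ * H = D * B := by
    rw [hBdef, Matrix.mul_add, Matrix.mul_nonsing_inv _ hDpd.det_pos.ne'.isUnit, Matrix.mul_assoc]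
  set u : (Matrix (Fin L) (Fin L) ℝ)ˣ := hDhpd.isUnit.unit with hudef
  have hu : (u : Matrix (Fin L) (Fin L) ℝ) = Dh := hDhpd.isUnit.unit_spec
  have huinv : ((u⁻¹ : (Matrix (Fin L) (Fin L) ℝ)ˣ) : Matrix (Fin L) (Fin L) ℝ) = Dh⁻¹ := by
    rw [← hu]; exact Matrix.coe_units_inv u
  have hconj : D * B = (u : Matrix (Fin L) (Fin L) ℝ) * S
      * ((u⁻¹ : (Matrix (Fin L) (Fin L) ℝ)ˣ) : Matrix (Fin L) (Fin L) ℝ) := by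
    rw [hu, huinv, hSdef]
    rw [show Dh * (Dh * B * Dh) * Dh⁻¹ = (Dh * Dh) * B * (Dh * Dh⁻¹) by
      simp only [Matrix.mul_assoc]]
    rw [Matrix.mul_nonsing_inv _ hDhpd.det_pos.ne'.isUnit, hDhDh, Matrix.mul_one]
  -- transfer the spectral hypothesis to S
  have hSspec : ∀ μ ∈ spectrum ℝ S, (a ℓ) ^ 2 > μ := by
    intro μ hμ
    apply h
    rw [hDB, hconj]
    rwa [spectrum.units_conjugate]
  -- S is Hermitian
  have hSherm : S.IsHermitian := by
    rw [hSdef]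
    have := Matrix.isHermitian_mul_mul_conjTranspose Dh hBpd.1
    rwa [hDhpd.1.eq] at this
  -- T := (a ℓ)^2 • 1 - S is positive semidefinite
  set T : Matrix (Fin L) (Fin L) ℝ := (a ℓ) ^ 2 • (1 : Matrix (Fin L) (Fin L) ℝ) - S
    with hTdef
  have hTherm : T.IsHermitian := by
    have h1 : (((a ℓ) ^ 2 • (1 : Matrix (Fin L) (Fin L) ℝ))).IsHermitian := by
      show ((a ℓ) ^ 2 • (1 : Matrix (Fin L) (Fin L) ℝ))ᴴ = _
      rw [Matrix.conjTranspose_smul, Matrix.conjTranspose_one]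
      simp
    exact h1.sub hSherm
  have hTalg : T = algebraMap ℝ (Matrix (Fin L) (Fin L) ℝ) ((a ℓ) ^ 2) - S := by
    rw [Algebra.algebraMap_eq_smul_one]
  have hTpsd : T.PosSemidef := by
    apply hTherm.posSemidef_iff_eigenvalues_nonneg.mpr
    intro i
    have hmem : hTherm.eigenvalues i ∈ spectrum ℝ T :=
      hTherm.eigenvalues_mem_spectrum_real i
    have hspec : spectrum ℝ T = ({(a ℓ) ^ 2} : Set ℝ) - spectrum ℝ S := by
      rw [hTalg, ← spectrum.singleton_sub_eq]
    rw [hspec] at hmem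
    obtain ⟨x, hx, y, hy, hxy⟩ := hmem
    rw [Set.mem_singleton_iff] at hx
    subst hx
    have := hSspec y hy
    simp only [← hxy, Pi.zero_apply]
    linarith
  -- evaluate the quadratic form of T at the ℓ-th basis vector
  have hSll : S ℓ ℓ = d ℓ * B ℓ ℓ := by
    rw [hSdef, hDhdef]
    rw [Matrix.mul_apply]
    have : ∀ j, (Matrix.diagonal s * B) ℓ j * Matrix.diagonal s j ℓ
        = if j = ℓ then s ℓ * B ℓ ℓ * s ℓ else 0 := by
      intro j
      by_cases hj : j = ℓ
      · subst hj; simp [Matrix.diagonal_mul]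
      · simp [Matrix.diagonal_apply_ne' s hj, hj]
    rw [Finset.sum_congr rfl fun j _ => this j]
    rw [Finset.sum_ite_eq' _ ℓ _]
    simp only [Finset.mem_univ, if_true]
    have : s ℓ * B ℓ ℓ * s ℓ = (s ℓ * s ℓ) * B ℓ ℓ := by ring
    rw [this, Real.mul_self_sqrt (hd ℓ).le]
  have hTe : Pi.single ℓ (1:ℝ) ⬝ᵥ T.mulVec (Pi.single ℓ (1:ℝ))
      = (a ℓ) ^ 2 - d ℓ * B ℓ ℓ := by
    have : T.mulVec (Pi.single ℓ (1:ℝ)) = fun i => T i ℓ * 1 := Matrix.mulVec_single T ℓ 1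
    rw [this, single_dotProduct]
    simp only [one_mul, mul_one, hTdef, Matrix.sub_apply, Matrix.smul_apply,
      Matrix.one_apply_eq, smul_eq_mul, mul_one, hSll]
  have hkey : d ℓ * B ℓ ℓ ≤ (a ℓ) ^ 2 := by
    have := hTpsd.dotProduct_mulVec_nonneg (Pi.single ℓ (1:ℝ))
    simp only [star_trivial] at this
    rw [hTe] at this
    linarith
  -- B ℓ ℓ > 0
  have hBll : 0 < B ℓ ℓ := by
    have h0 := hBpd.dotProduct_mulVec_pos (x := Pi.single ℓ (1:ℝ)) (by
      intro hcontra
      have := congrFun hcontra ℓ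
      simp at this)
    simp only [star_trivial] at h0
    have he : B.mulVec (Pi.single ℓ (1:ℝ)) = fun i => B i ℓ * 1 := Matrix.mulVec_single B ℓ 1
    rw [he, single_dotProduct] at h0
    simpa using h0
  -- Cauchy-Schwarz with B⁻¹
  have hBinv : (B⁻¹).PosSemidef := hBpd.inv.posSemidef
  have hBBinv : B⁻¹ * B = 1 := Matrix.nonsing_inv_mul _ hBpd.det_pos.ne'.isUnit
  have hCS := cs_psd hBinv a (B.mulVec (Pi.single ℓ (1:ℝ)))
  have h1 : B⁻¹.mulVec (B.mulVec (Pi.single ℓ (1:ℝ))) = Pi.single ℓ (1:ℝ) := by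
    rw [Matrix.mulVec_mulVec, hBBinv, Matrix.one_mulVec]
  rw [h1] at hCS
  have h2 : a ⬝ᵥ Pi.single ℓ (1:ℝ) = a ℓ := by
    rw [dotProduct_single, mul_one]
  have h3 : B.mulVec (Pi.single ℓ (1:ℝ)) ⬝ᵥ Pi.single ℓ (1:ℝ) = B ℓ ℓ := by
    have he : B.mulVec (Pi.single ℓ (1:ℝ)) = fun i => B i ℓ * 1 := Matrix.mulVec_single B ℓ 1
    rw [he, dotProduct_single]
    simp
  rw [h2, h3] at hCS
  -- conclude
  set Q : ℝ := a ⬝ᵥ B⁻¹.mulVec a with hQdef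
  have : d ℓ * B ℓ ℓ ≤ Q * B ℓ ℓ := le_trans hkey hCS
  have hfin : d ℓ ≤ Q := le_of_mul_le_mul_right (by linarith) hBll
  exact hfin
end

section
/- Let P be diagonal positive definite with entries P₁,…,P_L, H ∈ ℝ^{N×L} with columns h₁,…,h_L, and let δ_ℓ be the ℓ-th standard basis vector of ℝ^L. Then P_ℓ / (δ_ℓᵀ (P⁻¹ + HᵀH)⁻¹ δ_ℓ) = 1 + P_ℓ h_ℓᵀ (I + Σ_{i≠ℓ} P_i h_i h_iᵀ)⁻¹ h_ℓ. -/
open Matrix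

lemma psd_smul_vvt {N : ℕ} (c : ℝ) (hc : 0 ≤ c) (v : Fin N → ℝ) :
    (c • Matrix.vecMulVec v v).PosSemidef := by
  have hmv : ∀ x : Fin N → ℝ, (c • Matrix.vecMulVec v v).mulVec x = (c * (v ⬝ᵥ x)) • v := by
    intro x
    funext i
    simp only [mulVec, dotProduct, Matrix.smul_apply, vecMulVec_apply, smul_eq_mul,
      Pi.smul_apply]
    rw [Finset.mul_sum, Finset.sum_mul]
    exact Finset.sum_congr rfl fun j _ => by ring
  rw [posSemidef_iff_dotProduct_mulVec]
  constructor
  · ext i j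
    simp [conjTranspose_apply, vecMulVec_apply, mul_comm]
  · intro x
    rw [hmv]
    have : star x ⬝ᵥ (c * (v ⬝ᵥ x)) • v = c * (v ⬝ᵥ x) * (v ⬝ᵥ x) := by
      simp [dotProduct_smul, star_trivial, dotProduct_comm x v, smul_eq_mul]
    rw [this, mul_assoc]
    exact mul_nonneg hc (mul_self_nonneg _)

theorem stmt_4 {L N : ℕ} (d : Fin L → ℝ) (hd : ∀ i, 0 < d i)
    (H : Matrix (Fin N) (Fin L) ℝ) (ℓ : Fin L) :
    let P := Matrix.diagonal d
    let h : Fin L → (Fin N → ℝ) := fun i => fun j => H j i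
    let M := (1 : Matrix (Fin N) (Fin N) ℝ)
      + ∑ i ∈ Finset.univ.erase ℓ, d i • Matrix.vecMulVec (h i) (h i)
    d ℓ / (Pi.single ℓ 1 ⬝ᵥ ((P⁻¹ + Hᵀ * H)⁻¹).mulVec (Pi.single ℓ 1))
      = 1 + d ℓ * (h ℓ ⬝ᵥ M⁻¹.mulVec (h ℓ)) := by
  intro P h M
  set v : Fin N → ℝ := h ℓ with hv
  -- positive definiteness facts
  have hP : P.PosDef := Matrix.posDef_diagonal_iff.2 hd
  have hPinv : (P⁻¹).PosDef := hP.inv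
  have hHtH : (Hᵀ * H).PosSemidef := by
    have := Matrix.posSemidef_conjTranspose_mul_self H
    rwa [conjTranspose_eq_transpose_of_trivial] at this
  have hA : (P⁻¹ + Hᵀ * H).PosDef := hPinv.add_posSemidef hHtH
  have hsumPSD : ∀ (s : Finset (Fin L)),
      (∑ i ∈ s, d i • Matrix.vecMulVec (h i) (h i)).PosSemidef := by
    intro s
    induction s using Finset.induction with
    | empty => simpa using Matrix.PosSemidef.zero
    | insert a s hx ih =>
      rw [Finset.sum_insert hx]
      exact (psd_smul_vvt _ (hd _).le _).add ih
  have hM : M.PosDef := Matrix.PosDef.one.add_posSemidef (hsumPSD _)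
  set G : Matrix (Fin N) (Fin N) ℝ := 1 + H * P * Hᵀ with hGdef
  have hHPHt : H * P * Hᵀ = ∑ i : Fin L, d i • Matrix.vecMulVec (h i) (h i) := by
    ext j k
    simp only [Matrix.mul_apply, P, Matrix.diagonal_apply, Matrix.transpose_apply,
      Finset.sum_apply, Matrix.smul_apply, vecMulVec_apply, smul_eq_mul, mul_ite, mul_zero,
      ite_mul, zero_mul, Finset.sum_ite_eq, Finset.sum_ite_eq', Finset.mem_univ, if_true,
      Matrix.sum_apply]
    exact Finset.sum_congr rfl fun i _ => by ring
  have hGM : G = M + d ℓ • Matrix.vecMulVec v v := by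
    rw [hGdef, hHPHt, ← Finset.sum_erase_add _ _ (Finset.mem_univ ℓ)]
    simp only [M]
    abel
  have hG : G.PosDef := by
    rw [hGM]
    exact hM.add_posSemidef (psd_smul_vvt _ (hd _).le _)
  -- scalar quantities
  set s : ℝ := v ⬝ᵥ M⁻¹.mulVec v with hs
  set u : Fin N → ℝ := G⁻¹.mulVec v with hu
  set t : ℝ := v ⬝ᵥ u with ht
  -- s ≥ 0
  have hs0 : 0 ≤ s := by
    have := hM.posSemidef.inv.dotProduct_mulVec_nonneg v
    simpa [star_trivial] using this
  -- key relation: t * (1 + d ℓ * s) = s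
  have hGu : G.mulVec u = v := by
    rw [hu, mulVec_mulVec, Matrix.mul_nonsing_inv _ (Matrix.isUnit_iff_isUnit_det _ |>.1 hG.isUnit),
      one_mulVec]
  have hvvu : (Matrix.vecMulVec v v).mulVec u = (v ⬝ᵥ u) • v := by
    funext i
    simp only [mulVec, dotProduct, vecMulVec_apply, Pi.smul_apply, smul_eq_mul]
    rw [Finset.sum_mul]
    exact Finset.sum_congr rfl fun j _ => by ring
  have hMu : M.mulVec u = (1 - d ℓ * t) • v := by
    have : M.mulVec u + (d ℓ * t) • v = v := by
      have := hGu
      rw [hGM, Matrix.add_mulVec, Matrix.smul_mulVec, hvvu, ← ht, smul_smul] at this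
      exact this
    have h2 := congrArg (· - (d ℓ * t) • v) this
    simp only [add_sub_cancel_right] at h2
    rw [h2]
    funext i
    simp only [Pi.sub_apply, Pi.smul_apply, smul_eq_mul, sub_mul, one_mul]
  have huMv : u = (1 - d ℓ * t) • M⁻¹.mulVec v := by
    have : M⁻¹.mulVec (M.mulVec u) = u := by
      rw [mulVec_mulVec, Matrix.nonsing_inv_mul _ (Matrix.isUnit_iff_isUnit_det _ |>.1 hM.isUnit),
        one_mulVec]
    rw [← this, hMu]
    funext i
    simp only [mulVec, dotProduct, Pi.smul_apply, smul_eq_mul]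
    rw [Finset.mul_sum]
    exact Finset.sum_congr rfl fun j _ => by ring
  have key : t * (1 + d ℓ * s) = s := by
    have e : t = (1 - d ℓ * t) * s := by
      conv_lhs => rw [ht, huMv]
      rw [dotProduct_smul, smul_eq_mul, hs]
    linear_combination e
  have hprod : (1 - d ℓ * t) * (1 + d ℓ * s) = 1 := by
    linear_combination (-(d ℓ)) * key
  have h1s : (1 : ℝ) + d ℓ * s ≠ 0 := by
    intro h0; rw [h0, mul_zero] at hprod; exact one_ne_zero hprod.symm
  have h1t : (1 : ℝ) - d ℓ * t ≠ 0 := by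
    intro h0; rw [h0, zero_mul] at hprod; exact one_ne_zero hprod.symm
  -- Woodbury
  have hPdet : IsUnit P.det := Matrix.isUnit_iff_isUnit_det _ |>.1 hP.isUnit
  have hPinvinv : (P⁻¹)⁻¹ = P := Matrix.nonsing_inv_nonsing_inv _ hPdet
  have hGu' : IsUnit ((1 : Matrix (Fin N) (Fin N) ℝ)⁻¹ + H * (P⁻¹)⁻¹ * Hᵀ) := by
    rw [inv_one, hPinvinv]
    exact hG.isUnit
  have hW : (P⁻¹ + Hᵀ * H)⁻¹ = P - P * Hᵀ * G⁻¹ * H * P := by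
    have := Matrix.add_mul_mul_inv_eq_sub (P⁻¹) Hᵀ 1 H hPinv.isUnit isUnit_one hGu'
    rw [Matrix.mul_one, hPinvinv, inv_one] at this
    simpa [hGdef, mul_assoc] using this
  -- compute the quadratic form at the standard basis vector
  have hquad : Pi.single ℓ 1 ⬝ᵥ ((P⁻¹ + Hᵀ * H)⁻¹).mulVec (Pi.single ℓ 1)
      = d ℓ - d ℓ * d ℓ * t := by
    rw [hW]
    rw [mulVec_single_one, single_dotProduct]
    simp only [mul_one, one_mul, Matrix.col_apply]
    have hPll : (P - P * Hᵀ * G⁻¹ * H * P) ℓ ℓ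
        = d ℓ - (P * Hᵀ * G⁻¹ * H * P) ℓ ℓ := by
      simp [P, Matrix.sub_apply, Matrix.diagonal_apply_eq]
    rw [hPll]
    congr 1
    have : (P * Hᵀ * G⁻¹ * H * P) ℓ ℓ = d ℓ * ((Hᵀ * G⁻¹ * H) ℓ ℓ) * d ℓ := by
      rw [show P * Hᵀ * G⁻¹ * H * P = P * (Hᵀ * G⁻¹ * H) * P by simp only [Matrix.mul_assoc],
        Matrix.mul_diagonal, Matrix.diagonal_mul]
    rw [this]
    have hmid : (Hᵀ * G⁻¹ * H) ℓ ℓ = t := by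
      rw [ht, hu]
      simp only [Matrix.mul_apply, Matrix.transpose_apply, dotProduct, mulVec,
        Finset.sum_mul, Finset.mul_sum]
      rw [Finset.sum_comm]
      refine Finset.sum_congr rfl fun k _ => Finset.sum_congr rfl fun m _ => by
        simp [hv, h]; ring
    rw [hmid]; ring
  rw [hquad]
  have hden : d ℓ - d ℓ * d ℓ * t ≠ 0 := by
    have : d ℓ - d ℓ * d ℓ * t = d ℓ * (1 - d ℓ * t) := by ring
    rw [this]
    exact mul_ne_zero (hd ℓ).ne' h1t
  rw [div_eq_iff hden]
  linear_combination (-(d ℓ)) * hprod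
end

section
/- Let F ∈ ℝ^{L×L} satisfy FᵀF = (P⁻¹ + HᵀH)⁻¹ where P is positive definite and H ∈ ℝ^{N×L}. Let A_{m-1} ∈ ℝ^{(m-1)×L} have rank m−1 and let N_{m−1} = I − F A_{m−1}ᵀ (A_{m−1} FᵀF A_{m−1}ᵀ)⁻¹ A_{m−1} Fᵀ. Then for any a ∈ ℝ^L, min over b ∈ ℝ^N, c ∈ ℝ^{m−1} of ‖b‖² + ‖(bᵀH + cᵀA_{m−1} − aᵀ)P^{1/2}‖² equals ‖N_{m−1} F a‖², attained at cᵀ = aᵀ FᵀF A_{m−1}ᵀ (A_{m−1} FᵀF A_{m−1}ᵀ)⁻¹ and bᵀ = (aᵀ − cᵀ A_{m−1}) P Hᵀ (I + H P Hᵀ)⁻¹. -/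
open Matrix

/-- The positive semidefinite square root, as defined in the older Mathlib. -/
noncomputable def Matrix.PosSemidef.sqrt {n : Type*} [Fintype n] [DecidableEq n]
    {A : Matrix n n ℝ} (hA : A.PosSemidef) : Matrix n n ℝ :=
  hA.isHermitian.eigenvectorUnitary.1 * diagonal ((↑) ∘ (√·) ∘ hA.isHermitian.eigenvalues) *
    (star hA.isHermitian.eigenvectorUnitary : Matrix n n ℝ)

section Stmt5Aux

variable {n k : Type*} [Fintype n] [Fintype k]

/-- Move a matrix from the mulVec side to the other argument of a dot product. -/
lemma dp_mv (B : Matrix n k ℝ) (x : n → ℝ) (y : k → ℝ) :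
    x ⬝ᵥ B *ᵥ y = (Bᵀ *ᵥ x) ⬝ᵥ y := by
  rw [dotProduct_mulVec, ← mulVec_transpose]

lemma mv_dp (B : Matrix n k ℝ) (x : k → ℝ) (y : n → ℝ) :
    (B *ᵥ x) ⬝ᵥ y = x ⬝ᵥ Bᵀ *ᵥ y := by
  rw [dp_mv, transpose_transpose]

lemma dp_self_nonneg (x : n → ℝ) : 0 ≤ x ⬝ᵥ x :=
  Finset.sum_nonneg fun i _ => mul_self_nonneg _

end Stmt5Aux

theorem stmt_5 {L N m : ℕ} (P : Matrix (Fin L) (Fin L) ℝ) (hP : P.PosDef)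
    (H : Matrix (Fin N) (Fin L) ℝ) (F : Matrix (Fin L) (Fin L) ℝ)
    (hF : Fᵀ * F = (P⁻¹ + Hᵀ * H)⁻¹)
    (A : Matrix (Fin m) (Fin L) ℝ) (hA : A.rank = m) (a : Fin L → ℝ) :
    let S := hP.posSemidef.sqrt
    let f : (Fin N → ℝ) → (Fin m → ℝ) → ℝ := fun b c =>
      b ⬝ᵥ b + (vecMul (vecMul b H + vecMul c A - a) S) ⬝ᵥ
        (vecMul (vecMul b H + vecMul c A - a) S)
    let Nm := (1 : Matrix (Fin L) (Fin L) ℝ) - F * Aᵀ * (A * Fᵀ * F * Aᵀ)⁻¹ * A * Fᵀ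
    let copt : Fin m → ℝ := vecMul a (Fᵀ * F * Aᵀ * (A * Fᵀ * F * Aᵀ)⁻¹)
    let bopt : Fin N → ℝ :=
      vecMul (a - vecMul copt A) (P * Hᵀ * ((1 : Matrix (Fin N) (Fin N) ℝ) + H * P * Hᵀ)⁻¹)
    (∀ b c, (Nm.mulVec (F.mulVec a)) ⬝ᵥ (Nm.mulVec (F.mulVec a)) ≤ f b c)
      ∧ f bopt copt = (Nm.mulVec (F.mulVec a)) ⬝ᵥ (Nm.mulVec (F.mulVec a)) := by
  intro S f Nm copt bopt
  classical
  -- Basic symmetry facts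
  have hPt : Pᵀ = P := by
    have h : Pᴴ = P := hP.isHermitian
    rwa [Matrix.conjTranspose_eq_transpose_of_trivial] at h
  have hPP : P * P⁻¹ = 1 := Matrix.mul_nonsing_inv _ ((Matrix.isUnit_iff_isUnit_det _).mp hP.isUnit)
  -- M := 1 + H * P * Hᵀ
  have hHPHt : (H * P * Hᵀ).PosSemidef := by
    have h : (H * P * Hᴴ).PosSemidef := hP.posSemidef.mul_mul_conjTranspose_same H
    rwa [Matrix.conjTranspose_eq_transpose_of_trivial] at h
  have hMpd : ((1 : Matrix (Fin N) (Fin N) ℝ) + H * P * Hᵀ).PosDef :=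
    Matrix.PosDef.add_posSemidef Matrix.PosDef.one hHPHt
  have hMt : ((1 : Matrix (Fin N) (Fin N) ℝ) + H * P * Hᵀ)ᵀ
      = (1 : Matrix (Fin N) (Fin N) ℝ) + H * P * Hᵀ := by
    simp [transpose_add, transpose_mul, hPt, Matrix.mul_assoc]
  have hMdet : IsUnit ((1 : Matrix (Fin N) (Fin N) ℝ) + H * P * Hᵀ).det :=
    (Matrix.isUnit_iff_isUnit_det _).mp hMpd.isUnit
  have hMM : ((1 : Matrix (Fin N) (Fin N) ℝ) + H * P * Hᵀ)
      * ((1 : Matrix (Fin N) (Fin N) ℝ) + H * P * Hᵀ)⁻¹ = 1 := Matrix.mul_nonsing_inv _ hMdet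
  have hMM' : ((1 : Matrix (Fin N) (Fin N) ℝ) + H * P * Hᵀ)⁻¹
      * ((1 : Matrix (Fin N) (Fin N) ℝ) + H * P * Hᵀ) = 1 := Matrix.nonsing_inv_mul _ hMdet
  have hMit : (((1 : Matrix (Fin N) (Fin N) ℝ) + H * P * Hᵀ)⁻¹)ᵀ
      = ((1 : Matrix (Fin N) (Fin N) ℝ) + H * P * Hᵀ)⁻¹ := by
    rw [Matrix.transpose_nonsing_inv, hMt]
  -- Q := Fᵀ * F is positive definite
  have hQpd : (Fᵀ * F).PosDef := by
    rw [hF]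
    refine Matrix.PosDef.inv ?_
    refine Matrix.PosDef.add_posSemidef hP.inv ?_
    have h : (Hᴴ * H).PosSemidef := Matrix.posSemidef_conjTranspose_mul_self H
    rwa [Matrix.conjTranspose_eq_transpose_of_trivial] at h
  have hQt : (Fᵀ * F)ᵀ = Fᵀ * F := by simp [transpose_mul]
  -- rows of A are linearly independent
  have hAind : LinearIndependent ℝ (fun i => A i) := by
    rw [linearIndependent_iff_card_eq_finrank_span]
    rw [Set.finrank, show (Set.range fun i => A i) = Set.range A.row from rfl,
      ← Matrix.rank_eq_finrank_span_row, hA, Fintype.card_fin]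
  have hAinj : ∀ x : Fin m → ℝ, Aᵀ *ᵥ x = 0 → x = 0 := by
    intro x hx
    have hinj : Function.Injective A.vecMul := Matrix.vecMul_injective_iff.mpr hAind
    apply hinj
    show x ᵥ* A = 0 ᵥ* A
    rw [← Matrix.mulVec_transpose, hx, Matrix.zero_vecMul]
  -- G := A * Fᵀ * F * Aᵀ is positive definite
  have hGt : (A * Fᵀ * F * Aᵀ)ᵀ = A * Fᵀ * F * Aᵀ := by
    simp [transpose_mul, Matrix.mul_assoc]
  have hGpd : (A * Fᵀ * F * Aᵀ).PosDef := by
    refine Matrix.PosDef.of_dotProduct_mulVec_pos ?_ ?_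
    · show (A * Fᵀ * F * Aᵀ)ᴴ = _
      rwa [Matrix.conjTranspose_eq_transpose_of_trivial]
    · intro x hx
      have hy : Aᵀ *ᵥ x ≠ 0 := fun h => hx (hAinj x h)
      have hpos := hQpd.dotProduct_mulVec_pos hy
      have e1 : (A * Fᵀ * F * Aᵀ) *ᵥ x = A *ᵥ ((Fᵀ * F) *ᵥ (Aᵀ *ᵥ x)) := by
        simp [Matrix.mulVec_mulVec, Matrix.mul_assoc]
      simp only [star_trivial] at hpos ⊢
      rw [e1, dp_mv]
      exact hpos
  have hGdet : IsUnit (A * Fᵀ * F * Aᵀ).det := (Matrix.isUnit_iff_isUnit_det _).mp hGpd.isUnit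
  have hGG : (A * Fᵀ * F * Aᵀ) * (A * Fᵀ * F * Aᵀ)⁻¹ = 1 := Matrix.mul_nonsing_inv _ hGdet
  have hGit : ((A * Fᵀ * F * Aᵀ)⁻¹)ᵀ = (A * Fᵀ * F * Aᵀ)⁻¹ := by
    rw [Matrix.transpose_nonsing_inv, hGt]
  -- Woodbury identity
  have hWood : P - P * Hᵀ * ((1 : Matrix (Fin N) (Fin N) ℝ) + H * P * Hᵀ)⁻¹ * (H * P)
      = Fᵀ * F := by
    rw [hF]
    have core : ((1 : Matrix (Fin N) (Fin N) ℝ) + H * (P * Hᵀ))⁻¹ * H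
        + ((1 : Matrix (Fin N) (Fin N) ℝ) + H * (P * Hᵀ))⁻¹ * (H * (P * (Hᵀ * H))) = H := by
      rw [← Matrix.mul_assoc H P Hᵀ]
      rw [← Matrix.mul_add]
      have e5 : H + H * (P * (Hᵀ * H)) = ((1 : Matrix (Fin N) (Fin N) ℝ) + H * P * Hᵀ) * H := by
        rw [Matrix.add_mul, Matrix.one_mul, Matrix.mul_assoc, Matrix.mul_assoc]
      rw [e5, ← Matrix.mul_assoc, hMM', Matrix.one_mul]
    have h : (P - P * Hᵀ * ((1 : Matrix (Fin N) (Fin N) ℝ) + H * P * Hᵀ)⁻¹ * (H * P))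
        * (P⁻¹ + Hᵀ * H) = 1 := by
      rw [Matrix.sub_mul, Matrix.mul_add, Matrix.mul_add, hPP]
      have collect : P * Hᵀ * ((1 : Matrix (Fin N) (Fin N) ℝ) + H * P * Hᵀ)⁻¹ * (H * P) * P⁻¹
          + P * Hᵀ * ((1 : Matrix (Fin N) (Fin N) ℝ) + H * P * Hᵀ)⁻¹ * (H * P) * (Hᵀ * H)
          = P * (Hᵀ * H) := by
        simp only [Matrix.mul_assoc, hPP, Matrix.mul_one]
        rw [← Matrix.mul_add, ← Matrix.mul_add, core]
      rw [collect, add_sub_cancel_right]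
    exact (Matrix.inv_eq_left_inv h).symm
  have hMdet2 : IsUnit ((1 : Matrix (Fin N) (Fin N) ℝ) + H * (P * Hᵀ)).det := by
    rw [← Matrix.mul_assoc]; exact hMdet
  have hMit' : (((1 : Matrix (Fin N) (Fin N) ℝ) + H * (P * Hᵀ))⁻¹)ᵀ
      = ((1 : Matrix (Fin N) (Fin N) ℝ) + H * (P * Hᵀ))⁻¹ := by
    rw [← Matrix.mul_assoc]; exact hMit
  have hMM2' : ((1 : Matrix (Fin N) (Fin N) ℝ) + H * (P * Hᵀ))⁻¹
      * ((1 : Matrix (Fin N) (Fin N) ℝ) + H * (P * Hᵀ)) = 1 := by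
    rw [← Matrix.mul_assoc]; exact hMM'
  have hcanc : ∀ B : Matrix (Fin N) (Fin L) ℝ,
      ((1 : Matrix (Fin N) (Fin N) ℝ) + H * (P * Hᵀ))
        * (((1 : Matrix (Fin N) (Fin N) ℝ) + H * (P * Hᵀ))⁻¹ * B) = B :=
    fun B => Matrix.mul_nonsing_inv_cancel_left _ B hMdet2
  have hmat : P * (Hᵀ * ((1 : Matrix (Fin N) (Fin N) ℝ) + H * (P * Hᵀ))⁻¹)
      + P * (Hᵀ * (((1 : Matrix (Fin N) (Fin N) ℝ) + H * (P * Hᵀ))⁻¹ * (H * (P * Hᵀ))))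
      = P * Hᵀ := by
    have h1 : ((1 : Matrix (Fin N) (Fin N) ℝ) + H * (P * Hᵀ))⁻¹
        + ((1 : Matrix (Fin N) (Fin N) ℝ) + H * (P * Hᵀ))⁻¹ * (H * (P * Hᵀ)) = 1 := by
      nth_rewrite 1 [← Matrix.mul_one (((1 : Matrix (Fin N) (Fin N) ℝ) + H * (P * Hᵀ))⁻¹)]
      rw [← Matrix.mul_add, hMM2']
    rw [← Matrix.mul_add, ← Matrix.mul_add, h1, Matrix.mul_one]
  -- completing the square in b
  have step1 : ∀ (b : Fin N → ℝ) (e : Fin L → ℝ),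
      b ⬝ᵥ b + (Hᵀ *ᵥ b + e) ⬝ᵥ P *ᵥ (Hᵀ *ᵥ b + e)
        = (b + ((1 : Matrix (Fin N) (Fin N) ℝ) + H * P * Hᵀ)⁻¹ *ᵥ ((H * P) *ᵥ e)) ⬝ᵥ
            (((1 : Matrix (Fin N) (Fin N) ℝ) + H * P * Hᵀ) *ᵥ
              (b + ((1 : Matrix (Fin N) (Fin N) ℝ) + H * P * Hᵀ)⁻¹ *ᵥ ((H * P) *ᵥ e)))
          + e ⬝ᵥ (Fᵀ * F) *ᵥ e := by
    intro b e
    rw [← hWood]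
    simp only [Matrix.mulVec_add, Matrix.add_mulVec, Matrix.mulVec_sub, Matrix.sub_mulVec,
      Matrix.one_mulVec, Matrix.mulVec_mulVec, mv_dp, dotProduct_add, add_dotProduct,
      dotProduct_sub, sub_dotProduct, transpose_mul, transpose_transpose, transpose_one,
      hMit', hPt, Matrix.mul_assoc, Matrix.mul_one, Matrix.one_mul, hcanc]
    have hcross : e ⬝ᵥ (P * (Hᵀ * ((1 : Matrix (Fin N) (Fin N) ℝ) + H * (P * Hᵀ))⁻¹)) *ᵥ b
        + e ⬝ᵥ (P * (Hᵀ * (((1 : Matrix (Fin N) (Fin N) ℝ) + H * (P * Hᵀ))⁻¹ * (H * (P * Hᵀ))))) *ᵥ b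
        = e ⬝ᵥ (P * Hᵀ) *ᵥ b := by
      rw [← dotProduct_add, ← Matrix.add_mulVec, hmat]
    linear_combination -hcross
  -- the residual vector
  have hw : Nm *ᵥ (F *ᵥ a)
      = F *ᵥ a - (F * Aᵀ) *ᵥ ((A * Fᵀ * F * Aᵀ)⁻¹ *ᵥ ((A * Fᵀ * F) *ᵥ a)) := by
    show ((1 : Matrix (Fin L) (Fin L) ℝ) - F * Aᵀ * (A * Fᵀ * F * Aᵀ)⁻¹ * A * Fᵀ)
        *ᵥ (F *ᵥ a) = _
    rw [Matrix.sub_mulVec, Matrix.one_mulVec]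
    congr 1
    simp [Matrix.mulVec_mulVec, Matrix.mul_assoc]
  have horth : (A * Fᵀ) *ᵥ (Nm *ᵥ (F *ᵥ a)) = 0 := by
    rw [Matrix.mulVec_mulVec]
    have hz : (A * Fᵀ) * Nm = 0 := by
      show (A * Fᵀ) * ((1 : Matrix (Fin L) (Fin L) ℝ)
          - F * Aᵀ * (A * Fᵀ * F * Aᵀ)⁻¹ * A * Fᵀ) = 0
      rw [Matrix.mul_sub, Matrix.mul_one, sub_eq_zero]
      calc A * Fᵀ = (A * Fᵀ * F * Aᵀ * (A * Fᵀ * F * Aᵀ)⁻¹) * (A * Fᵀ) := by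
            rw [hGG, Matrix.one_mul]
        _ = (A * Fᵀ) * (F * Aᵀ * (A * Fᵀ * F * Aᵀ)⁻¹ * A * Fᵀ) := by
            simp only [Matrix.mul_assoc]
    rw [hz, Matrix.zero_mulVec]
  -- completing the square in c
  have step2 : ∀ c : Fin m → ℝ,
      (Aᵀ *ᵥ c - a) ⬝ᵥ (Fᵀ * F) *ᵥ (Aᵀ *ᵥ c - a)
        = ((F * Aᵀ) *ᵥ (c - (A * Fᵀ * F * Aᵀ)⁻¹ *ᵥ ((A * Fᵀ * F) *ᵥ a))) ⬝ᵥ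
            ((F * Aᵀ) *ᵥ (c - (A * Fᵀ * F * Aᵀ)⁻¹ *ᵥ ((A * Fᵀ * F) *ᵥ a)))
          + (Nm *ᵥ (F *ᵥ a)) ⬝ᵥ (Nm *ᵥ (F *ᵥ a)) := by
    intro c
    have hx : F *ᵥ (Aᵀ *ᵥ c - a)
        = (F * Aᵀ) *ᵥ (c - (A * Fᵀ * F * Aᵀ)⁻¹ *ᵥ ((A * Fᵀ * F) *ᵥ a))
          - Nm *ᵥ (F *ᵥ a) := by
      rw [hw, Matrix.mulVec_sub, Matrix.mulVec_sub, Matrix.mulVec_mulVec]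
      abel
    have hc1 : ((F * Aᵀ) *ᵥ (c - (A * Fᵀ * F * Aᵀ)⁻¹ *ᵥ ((A * Fᵀ * F) *ᵥ a))) ⬝ᵥ
        (Nm *ᵥ (F *ᵥ a)) = 0 := by
      rw [mv_dp, transpose_mul, transpose_transpose, horth, dotProduct_zero]
    have hc2 : (Nm *ᵥ (F *ᵥ a)) ⬝ᵥ
        ((F * Aᵀ) *ᵥ (c - (A * Fᵀ * F * Aᵀ)⁻¹ *ᵥ ((A * Fᵀ * F) *ᵥ a))) = 0 := by
      rw [dotProduct_comm]; exact hc1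
    have hql : (Aᵀ *ᵥ c - a) ⬝ᵥ (Fᵀ * F) *ᵥ (Aᵀ *ᵥ c - a)
        = (F *ᵥ (Aᵀ *ᵥ c - a)) ⬝ᵥ (F *ᵥ (Aᵀ *ᵥ c - a)) := by
      rw [mv_dp, Matrix.mulVec_mulVec]
    rw [hql, hx]
    simp only [sub_dotProduct, dotProduct_sub]
    linear_combination -hc1 - hc2
  -- the master identity
  have key : ∀ (b : Fin N → ℝ) (c : Fin m → ℝ), f b c
      = (b + ((1 : Matrix (Fin N) (Fin N) ℝ) + H * P * Hᵀ)⁻¹ *ᵥ ((H * P) *ᵥ (Aᵀ *ᵥ c - a))) ⬝ᵥ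
          (((1 : Matrix (Fin N) (Fin N) ℝ) + H * P * Hᵀ) *ᵥ
            (b + ((1 : Matrix (Fin N) (Fin N) ℝ) + H * P * Hᵀ)⁻¹ *ᵥ ((H * P) *ᵥ (Aᵀ *ᵥ c - a))))
        + ((F * Aᵀ) *ᵥ (c - (A * Fᵀ * F * Aᵀ)⁻¹ *ᵥ ((A * Fᵀ * F) *ᵥ a))) ⬝ᵥ
            ((F * Aᵀ) *ᵥ (c - (A * Fᵀ * F * Aᵀ)⁻¹ *ᵥ ((A * Fᵀ * F) *ᵥ a)))
        + (Nm *ᵥ (F *ᵥ a)) ⬝ᵥ (Nm *ᵥ (F *ᵥ a)) := by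
    intro b c
    have hSt : Sᵀ = S := by
      have h : Sᴴ = S := by
        simp only [S, Matrix.PosSemidef.sqrt, Matrix.conjTranspose_mul, Matrix.diagonal_conjTranspose,
          star_trivial, Matrix.mul_assoc]
        rfl
      rwa [Matrix.conjTranspose_eq_transpose_of_trivial] at h
    have hSS : S * S = P := by
      have hU := Unitary.coe_star_mul_self hP.posSemidef.isHermitian.eigenvectorUnitary
      have hD : diagonal (((↑) : ℝ → ℝ) ∘ (√·) ∘ hP.posSemidef.isHermitian.eigenvalues)
          * diagonal (((↑) : ℝ → ℝ) ∘ (√·) ∘ hP.posSemidef.isHermitian.eigenvalues)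
          = diagonal (RCLike.ofReal ∘ hP.posSemidef.isHermitian.eigenvalues) := by
        rw [Matrix.diagonal_mul_diagonal]
        congr 1
        funext i
        simp [Real.mul_self_sqrt (hP.posSemidef.eigenvalues_nonneg i)]
      conv_rhs => rw [hP.posSemidef.isHermitian.spectral_theorem, Unitary.conjStarAlgAut_apply]
      simp only [S, Matrix.PosSemidef.sqrt, Matrix.mul_assoc]
      rw [← Matrix.mul_assoc (star _ : Matrix (Fin L) (Fin L) ℝ) _ (diagonal _ * _), hU,
        Matrix.one_mul, ← Matrix.mul_assoc (diagonal _) (diagonal _), hD]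
    have hfb : f b c = b ⬝ᵥ b
        + (Hᵀ *ᵥ b + (Aᵀ *ᵥ c - a)) ⬝ᵥ P *ᵥ (Hᵀ *ᵥ b + (Aᵀ *ᵥ c - a)) := by
      show b ⬝ᵥ b + ((b ᵥ* H + c ᵥ* A - a) ᵥ* S) ⬝ᵥ ((b ᵥ* H + c ᵥ* A - a) ᵥ* S) = _
      rw [← Matrix.mulVec_transpose S, hSt, mv_dp, hSt, Matrix.mulVec_mulVec, hSS,
        ← Matrix.mulVec_transpose H, ← Matrix.mulVec_transpose A, add_sub_assoc]
    rw [hfb, step1 b (Aᵀ *ᵥ c - a), step2 c, add_assoc]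
  refine ⟨?_, ?_⟩
  · intro b c
    rw [key b c]
    have h1 : 0 ≤ (b + ((1 : Matrix (Fin N) (Fin N) ℝ) + H * P * Hᵀ)⁻¹ *ᵥ
        ((H * P) *ᵥ (Aᵀ *ᵥ c - a))) ⬝ᵥ
          (((1 : Matrix (Fin N) (Fin N) ℝ) + H * P * Hᵀ) *ᵥ
            (b + ((1 : Matrix (Fin N) (Fin N) ℝ) + H * P * Hᵀ)⁻¹ *ᵥ
              ((H * P) *ᵥ (Aᵀ *ᵥ c - a)))) := by
      have := hMpd.posSemidef.dotProduct_mulVec_nonneg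
        (b + ((1 : Matrix (Fin N) (Fin N) ℝ) + H * P * Hᵀ)⁻¹ *ᵥ ((H * P) *ᵥ (Aᵀ *ᵥ c - a)))
      simpa [star_trivial] using this
    have h2 : 0 ≤ ((F * Aᵀ) *ᵥ (c - (A * Fᵀ * F * Aᵀ)⁻¹ *ᵥ ((A * Fᵀ * F) *ᵥ a))) ⬝ᵥ
        ((F * Aᵀ) *ᵥ (c - (A * Fᵀ * F * Aᵀ)⁻¹ *ᵥ ((A * Fᵀ * F) *ᵥ a))) :=
      dp_self_nonneg _
    linarith
  · have hcopt : copt = (A * Fᵀ * F * Aᵀ)⁻¹ *ᵥ ((A * Fᵀ * F) *ᵥ a) := by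
      show vecMul a (Fᵀ * F * Aᵀ * (A * Fᵀ * F * Aᵀ)⁻¹) = _
      rw [← Matrix.mulVec_transpose, Matrix.mulVec_mulVec]
      congr 1
      rw [transpose_mul, hGit]
      simp [transpose_mul, Matrix.mul_assoc]
    have hbopt : bopt = -(((1 : Matrix (Fin N) (Fin N) ℝ) + H * P * Hᵀ)⁻¹ *ᵥ
        ((H * P) *ᵥ (Aᵀ *ᵥ copt - a))) := by
      show vecMul (a - vecMul copt A)
          (P * Hᵀ * ((1 : Matrix (Fin N) (Fin N) ℝ) + H * P * Hᵀ)⁻¹) = _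
      rw [← Matrix.mulVec_transpose, ← Matrix.mulVec_transpose A, Matrix.mulVec_mulVec,
        ← Matrix.mulVec_neg, neg_sub]
      congr 1
      rw [transpose_mul, hMit]
      simp [transpose_mul, hPt, Matrix.mul_assoc]
    rw [key bopt copt]
    have h1 : bopt + ((1 : Matrix (Fin N) (Fin N) ℝ) + H * P * Hᵀ)⁻¹ *ᵥ
        ((H * P) *ᵥ (Aᵀ *ᵥ copt - a)) = 0 := by
      rw [hbopt, neg_add_cancel]
    have h2 : copt - (A * Fᵀ * F * Aᵀ)⁻¹ *ᵥ ((A * Fᵀ * F) *ᵥ a) = 0 := by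
      rw [hcopt, sub_self]
    rw [h1, h2]
    simp
end

section
/- Let P be diagonal positive definite with entries P₁,…,P_L, H ∈ ℝ^{N×L}, and let F ∈ ℝ^{L×L} satisfy FᵀF = (P⁻¹+HᵀH)⁻¹. Let A ∈ ℤ^{L×L} be unimodular with rows a₁ᵀ,…,a_Lᵀ, let A_{m−1} denote the submatrix of the first m−1 rows, and define σ²_m = ‖N_{m−1} F a_m‖² where N_{m−1} is the projection onto the nullspace of A_{m−1}Fᵀ (with N₀ = I). Then Σ_{m=1}^L (1/2) log(P_{π(m)} / σ²_m) = (1/2) log det(I + H P Hᵀ) for any permutation π of {1,…,L}; equivalently, ∏_{m=1}^L σ²_m = det((P⁻¹+HᵀH)⁻¹) = ∏_ℓ P_ℓ / det(I + H P Hᵀ). -/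
open Matrix

lemma star_triv {n : ℕ} (x : Fin n → ℝ) : star x = x := by
  funext i; simp

lemma indsum {m n : ℕ} (e : Fin m → Fin n) (x : Fin m → ℝ) (g : Fin n → ℝ) :
    ∑ j, g j * (∑ i, if e i = j then x i else 0) = ∑ i, g (e i) * x i := by
  simp only [Finset.mul_sum, mul_ite, mul_zero]
  rw [Finset.sum_comm]
  simp [Finset.sum_ite_eq]

lemma posDef_conj {n : ℕ} {S B : Matrix (Fin n) (Fin n) ℝ}
    (hS : S.PosDef) (hB : IsUnit B.det) : (B * S * Bᵀ).PosDef := by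
  have hsd : (B * S * Bᵀ).PosSemidef := by
    have := hS.posSemidef.mul_mul_conjTranspose_same B
    rwa [conjTranspose_eq_transpose_of_trivial] at this
  refine PosDef.of_dotProduct_mulVec_pos hsd.isHermitian fun x hx => ?_
  have hy : Bᵀ *ᵥ x ≠ 0 := by
    have : Function.Injective (Bᵀ.mulVec) :=
      mulVec_injective_iff_isUnit.mpr
        ((isUnit_iff_isUnit_det _).mpr (by rwa [det_transpose]))
    intro h
    exact hx (this (by simpa using h))
  have key : star x ⬝ᵥ (B * S * Bᵀ) *ᵥ x
      = star (Bᵀ *ᵥ x) ⬝ᵥ S *ᵥ (Bᵀ *ᵥ x) := by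
    rw [star_triv, star_triv, ← mulVec_mulVec, ← mulVec_mulVec,
      dotProduct_mulVec, ← mulVec_transpose]
  rw [key]
  exact hS.dotProduct_mulVec_pos hy

lemma posDef_submatrix {n m : ℕ} {M : Matrix (Fin n) (Fin n) ℝ}
    (hM : M.PosDef) (e : Fin m → Fin n) (he : Function.Injective e) :
    (M.submatrix e e).PosDef := by
  refine PosDef.of_dotProduct_mulVec_pos (hM.posSemidef.submatrix e).isHermitian fun x hx => ?_
  set y : Fin n → ℝ := fun j => ∑ i, if e i = j then x i else 0 with hy
  have hyx : ∀ i, y (e i) = x i := by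
    intro i
    simp only [hy]
    rw [Finset.sum_eq_single i]
    · simp
    · intro b _ hb; simp [he.ne hb]
    · simp
  have hyne : y ≠ 0 := by
    intro h
    apply hx
    funext i
    have := congrFun h (e i)
    rw [hyx i] at this
    simpa using this
  have key : star x ⬝ᵥ (M.submatrix e e) *ᵥ x = star y ⬝ᵥ M *ᵥ y := by
    rw [star_triv, star_triv]
    simp only [dotProduct, mulVec, dotProduct, submatrix_apply, hy]
    have inner : ∀ j, ∑ k, M j k * (∑ i, if e i = k then x i else 0)
        = ∑ i2, M j (e i2) * x i2 := fun j => indsum e x (M j)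
    calc ∑ i, x i * ∑ i2, M (e i) (e i2) * x i2
        = ∑ i, (fun j => ∑ i2, M j (e i2) * x i2) (e i) * x i := by
          simp only [mul_comm]
      _ = ∑ j, (∑ i2, M j (e i2) * x i2) * (∑ i, if e i = j then x i else 0) := by
          rw [← indsum e x (fun j => ∑ i2, M j (e i2) * x i2)]
      _ = ∑ j, (∑ i, if e i = j then x i else 0) * ∑ k, M j k * ∑ i, if e i = k then x i else 0 := by
          refine Finset.sum_congr rfl fun j _ => ?_
          rw [inner j, mul_comm]
  rw [key]
  exact hM.dotProduct_mulVec_pos hyne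

lemma det_leading_step {L : ℕ} (G : Matrix (Fin L) (Fin L) ℝ) (hG : G.PosDef) (m : Fin L) :
    (G.submatrix (Fin.castLE m.isLt) (Fin.castLE m.isLt)).det
      = (G.submatrix (Fin.castLE m.isLt.le) (Fin.castLE m.isLt.le)).det *
        (G m m - ((fun i => G (Fin.castLE m.isLt.le i) m) ᵥ*
            (G.submatrix (Fin.castLE m.isLt.le) (Fin.castLE m.isLt.le))⁻¹) ⬝ᵥ
          (fun i => G (Fin.castLE m.isLt.le i) m)) := by
  set k := m.val with hk
  set Gs := G.submatrix (Fin.castLE m.isLt.le) (Fin.castLE m.isLt.le) with hGs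
  set b : Fin k → ℝ := fun i => G (Fin.castLE m.isLt.le i) m with hb
  have hGsym : ∀ i j, G i j = G j i := by
    intro i j
    have := hG.isHermitian
    rw [IsHermitian, conjTranspose_eq_transpose_of_trivial] at this
    conv_lhs => rw [← this]
    rfl
  have hGsPD : Gs.PosDef := posDef_submatrix hG _ (Fin.castLE_injective _)
  haveI : Invertible Gs := invertibleOfIsUnitDet Gs hGsPD.det_pos.ne'.isUnit
  set B : Matrix (Fin k) (Fin 1) ℝ := Matrix.of fun i _ => b i with hB
  set C : Matrix (Fin 1) (Fin k) ℝ := Matrix.of fun _ i => b i with hC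
  set D : Matrix (Fin 1) (Fin 1) ℝ := Matrix.of fun _ _ => G m m with hD
  have hblock : (G.submatrix (Fin.castLE m.isLt) (Fin.castLE m.isLt)).submatrix
      finSumFinEquiv finSumFinEquiv = fromBlocks Gs B C D := by
    have hL : ∀ i : Fin k, Fin.castLE m.isLt
          ((finSumFinEquiv (m := k) (n := 1)) (Sum.inl i))
        = Fin.castLE m.isLt.le i := fun i => Fin.ext (by simp)
    have hR : ∀ i : Fin 1, Fin.castLE m.isLt
          ((finSumFinEquiv (m := k) (n := 1)) (Sum.inr i)) = m :=
      fun i => Fin.ext (by simp [Fin.val_eq_zero, hk])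
    ext i j
    rcases i with i | i <;> rcases j with j | j
    · show G (Fin.castLE m.isLt ((finSumFinEquiv (m := k) (n := 1)) (Sum.inl i)))
          (Fin.castLE m.isLt ((finSumFinEquiv (m := k) (n := 1)) (Sum.inl j)))
        = G (Fin.castLE m.isLt.le i) (Fin.castLE m.isLt.le j)
      rw [hL, hL]
    · show G (Fin.castLE m.isLt ((finSumFinEquiv (m := k) (n := 1)) (Sum.inl i)))
          (Fin.castLE m.isLt ((finSumFinEquiv (m := k) (n := 1)) (Sum.inr j)))
        = G (Fin.castLE m.isLt.le i) m
      rw [hL, hR]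
    · show G (Fin.castLE m.isLt ((finSumFinEquiv (m := k) (n := 1)) (Sum.inr i)))
          (Fin.castLE m.isLt ((finSumFinEquiv (m := k) (n := 1)) (Sum.inl j)))
        = G (Fin.castLE m.isLt.le j) m
      rw [hL, hR, hGsym]
    · show G (Fin.castLE m.isLt ((finSumFinEquiv (m := k) (n := 1)) (Sum.inr i)))
          (Fin.castLE m.isLt ((finSumFinEquiv (m := k) (n := 1)) (Sum.inr j)))
        = G m m
      rw [hR, hR]
  have hdet1 : (G.submatrix (Fin.castLE m.isLt) (Fin.castLE m.isLt)).det
      = (fromBlocks Gs B C D).det := by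
    rw [← hblock, det_submatrix_equiv_self]
  rw [hdet1, det_fromBlocks₁₁, invOf_eq_nonsing_inv]
  congr 1
  rw [det_fin_one]
  simp only [Matrix.sub_apply, hD, of_apply]
  congr 1

noncomputable def schurVal {L : ℕ} (G : Matrix (Fin L) (Fin L) ℝ) (m : Fin L) : ℝ :=
  G m m - ((fun i => G (Fin.castLE m.isLt.le i) m) ᵥ*
      (G.submatrix (Fin.castLE m.isLt.le) (Fin.castLE m.isLt.le))⁻¹) ⬝ᵥ
    (fun i => G (Fin.castLE m.isLt.le i) m)

lemma det_leading_step' {L : ℕ} (G : Matrix (Fin L) (Fin L) ℝ) (hG : G.PosDef) (m : Fin L) :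
    (G.submatrix (Fin.castLE m.isLt) (Fin.castLE m.isLt)).det
      = (G.submatrix (Fin.castLE m.isLt.le) (Fin.castLE m.isLt.le)).det * schurVal G m :=
  det_leading_step G hG m

lemma schurVal_pos {L : ℕ} (G : Matrix (Fin L) (Fin L) ℝ) (hG : G.PosDef) (m : Fin L) :
    0 < schurVal G m := by
  have h1 : 0 < (G.submatrix (Fin.castLE m.isLt) (Fin.castLE m.isLt)).det :=
    (posDef_submatrix hG _ (Fin.castLE_injective _)).det_pos
  have h2 : 0 < (G.submatrix (Fin.castLE m.isLt.le) (Fin.castLE m.isLt.le)).det :=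
    (posDef_submatrix hG _ (Fin.castLE_injective _)).det_pos
  have h3 := det_leading_step' G hG m
  nlinarith [h1, h2, h3]

lemma det_leading_prod {L : ℕ} (G : Matrix (Fin L) (Fin L) ℝ) (hG : G.PosDef) :
    ∀ (k : ℕ) (hk : k ≤ L),
      (G.submatrix (Fin.castLE hk) (Fin.castLE hk)).det
        = ∏ i : Fin k, schurVal G (Fin.castLE hk i) := by
  intro k
  induction k with
  | zero =>
    intro hk
    rw [det_fin_zero]
    simp
  | succ k ih =>
    intro hk
    have hkL : k < L := hk
    set m : Fin L := ⟨k, hkL⟩ with hm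
    have e1 : (G.submatrix (Fin.castLE hk) (Fin.castLE hk)).det
        = (G.submatrix (Fin.castLE m.isLt) (Fin.castLE m.isLt)).det := rfl
    rw [e1, det_leading_step' G hG m, ih m.isLt.le, Fin.prod_univ_castSucc]
    congr 1

lemma det_eq_prod_schurVal {L : ℕ} (G : Matrix (Fin L) (Fin L) ℝ) (hG : G.PosDef) :
    G.det = ∏ m, schurVal G m := by
  have h := det_leading_prod G hG L le_rfl
  have e1 : G.submatrix (Fin.castLE le_rfl) (Fin.castLE le_rfl) = G := by
    ext i j; rfl
  have e2 : ∀ i : Fin L, Fin.castLE le_rfl i = i := fun i => Fin.ext rfl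
  rw [e1] at h
  rw [h]
  exact Finset.prod_congr rfl fun i _ => by rw [e2]

lemma submul_left {p q r s : Type*} [Fintype q] (M : Matrix p q ℝ) (N : Matrix q r ℝ)
    (e : s → p) : M.submatrix e id * N = (M * N).submatrix e id := by
  ext i j; simp [mul_apply]

lemma submul_both {p q r s t : Type*} [Fintype q] (M : Matrix p q ℝ) (N : Matrix q r ℝ)
    (e₁ : s → p) (e₂ : t → r) :
    M.submatrix e₁ id * N.submatrix id e₂ = (M * N).submatrix e₁ e₂ := by
  ext i j; simp [mul_apply]

lemma sigma_eq {L : ℕ} (F AR : Matrix (Fin L) (Fin L) ℝ)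
    (hPD : (AR * (Fᵀ * F) * ARᵀ).PosDef) (m : Fin L) :
    (((1 : Matrix (Fin L) (Fin L) ℝ) -
        F * (AR.submatrix (Fin.castLE m.isLt.le) id)ᵀ *
        (AR.submatrix (Fin.castLE m.isLt.le) id * Fᵀ * F *
          (AR.submatrix (Fin.castLE m.isLt.le) id)ᵀ)⁻¹ *
        AR.submatrix (Fin.castLE m.isLt.le) id * Fᵀ) *ᵥ (F *ᵥ AR m)) ⬝ᵥ
      (((1 : Matrix (Fin L) (Fin L) ℝ) -
        F * (AR.submatrix (Fin.castLE m.isLt.le) id)ᵀ *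
        (AR.submatrix (Fin.castLE m.isLt.le) id * Fᵀ * F *
          (AR.submatrix (Fin.castLE m.isLt.le) id)ᵀ)⁻¹ *
        AR.submatrix (Fin.castLE m.isLt.le) id * Fᵀ) *ᵥ (F *ᵥ AR m))
      = schurVal (AR * (Fᵀ * F) * ARᵀ) m := by
  set e : Fin m.val → Fin L := Fin.castLE m.isLt.le with he
  set G : Matrix (Fin L) (Fin L) ℝ := AR * (Fᵀ * F) * ARᵀ with hG
  set As : Matrix (Fin m.val) (Fin L) ℝ := AR.submatrix e id with hAs
  set Gs : Matrix (Fin m.val) (Fin m.val) ℝ := G.submatrix e e with hGs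
  set v : Fin L → ℝ := F *ᵥ AR m with hv
  set b : Fin m.val → ℝ := fun i => G (e i) m with hb
  -- the middle matrix is Gs
  have hMM : As * Fᵀ * F * Asᵀ = Gs := by
    rw [hAs, transpose_submatrix, submul_left, submul_left, submul_both, hGs, hG,
      mul_assoc (AR * Fᵀ)]
    congr 1
    simp only [Matrix.mul_assoc]
  have hGsPD : Gs.PosDef := posDef_submatrix hPD _ (Fin.castLE_injective _)
  have hGsym : Gᵀ = G := by
    have := hPD.isHermitian
    rwa [IsHermitian, conjTranspose_eq_transpose_of_trivial] at this
  have hGssym : Gsᵀ = Gs := by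
    rw [hGs, transpose_submatrix, hGsym]
  have hGsInv : IsUnit Gs.det := hGsPD.det_pos.ne'.isUnit
  set P : Matrix (Fin L) (Fin L) ℝ := F * Asᵀ * Gs⁻¹ * As * Fᵀ with hP
  have hNm : (1 : Matrix (Fin L) (Fin L) ℝ) -
        F * Asᵀ * (As * Fᵀ * F * Asᵀ)⁻¹ * As * Fᵀ = 1 - P := by
    rw [hMM]
  rw [hNm]
  -- P is symmetric
  have hPsymm : Pᵀ = P := by
    rw [hP]
    simp only [transpose_mul, transpose_transpose, transpose_nonsing_inv, hGssym]
    simp only [Matrix.mul_assoc]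
  -- P is idempotent
  have hPP : P * P = P := by
    rw [hP]
    have h1 : F * Asᵀ * Gs⁻¹ * As * Fᵀ * (F * Asᵀ * Gs⁻¹ * As * Fᵀ)
        = F * Asᵀ * (Gs⁻¹ * (As * Fᵀ * F * Asᵀ) * Gs⁻¹) * As * Fᵀ := by
      simp only [Matrix.mul_assoc]
    rw [h1, hMM, Matrix.nonsing_inv_mul _ hGsInv, Matrix.one_mul]
  -- (1-P)ᵀ(1-P) = 1-P
  have hNN : ((1 : Matrix (Fin L) (Fin L) ℝ) - P)ᵀ * (1 - P) = 1 - P := by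
    rw [transpose_sub, transpose_one, hPsymm]
    simp only [Matrix.sub_mul, Matrix.mul_sub, Matrix.one_mul, Matrix.mul_one, hPP]
    abel
  -- reduce dot product to quadratic form
  have hquad : ((1 - P) *ᵥ v) ⬝ᵥ ((1 - P) *ᵥ v)
      = (v ᵥ* ((1 - P)ᵀ * (1 - P))) ⬝ᵥ v := by
    have h1 : (1 - P) *ᵥ v = v ᵥ* (1 - P)ᵀ := by
      rw [← mulVec_transpose, transpose_transpose]
    rw [dotProduct_mulVec, h1, vecMul_vecMul]
  rw [hquad, hNN]
  -- expand
  have hsplit : (v ᵥ* (1 - P)) ⬝ᵥ v = v ⬝ᵥ v - (v ᵥ* P) ⬝ᵥ v := by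
    rw [vecMul_sub, sub_dotProduct, vecMul_one]
  -- v ⬝ᵥ v = G m m
  have hvv : v ⬝ᵥ v = G m m := by
    rw [hv, dotProduct_mulVec]
    have h1 : (F *ᵥ AR m) ᵥ* F = AR m ᵥ* (Fᵀ * F) := by
      rw [← transpose_transpose F, mulVec_transpose, vecMul_vecMul, transpose_transpose]
    rw [h1, hG]
    simp only [mul_apply, vecMul, dotProduct, transpose_apply]
  -- (As * Fᵀ) *ᵥ v = b
  have hAsF : As * Fᵀ * F = (AR * (Fᵀ * F)).submatrix e id := by
    rw [hAs, submul_left, submul_left, mul_assoc]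
  have hb1 : (As * Fᵀ) *ᵥ v = b := by
    rw [hv, mulVec_mulVec, hAsF]
    funext i
    simp only [mulVec, dotProduct, submatrix_apply, id_eq, hb, hG, mul_apply,
      transpose_apply]
  have h2 : v ᵥ* (F * Asᵀ) = b := by
    rw [← mulVec_transpose, transpose_mul, transpose_transpose, hb1]
  have hPv : (v ᵥ* P) ⬝ᵥ v = (b ᵥ* Gs⁻¹) ⬝ᵥ b := by
    rw [hP, ← vecMul_vecMul, ← vecMul_vecMul, ← vecMul_vecMul, h2,
      ← dotProduct_mulVec, ← dotProduct_mulVec, mulVec_mulVec, hb1]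
  rw [hsplit, hvv, hPv]
  rfl

theorem stmt_8 {L N : ℕ} (d : Fin L → ℝ) (hd : ∀ i, 0 < d i)
    (H : Matrix (Fin N) (Fin L) ℝ) (F : Matrix (Fin L) (Fin L) ℝ)
    (hF : Fᵀ * F = ((Matrix.diagonal d)⁻¹ + Hᵀ * H)⁻¹)
    (A : Matrix (Fin L) (Fin L) ℤ) (hA : A.det = 1 ∨ A.det = -1)
    (π : Equiv.Perm (Fin L)) :
    let AR : Matrix (Fin L) (Fin L) ℝ := A.map (fun z => (z : ℝ))
    let Asub : (m : Fin L) → Matrix (Fin m.val) (Fin L) ℝ := fun m =>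
      Matrix.of fun i j => AR ⟨i.val, i.isLt.trans m.isLt⟩ j
    let Nm : (m : Fin L) → Matrix (Fin L) (Fin L) ℝ := fun m =>
      1 - F * (Asub m)ᵀ * (Asub m * Fᵀ * F * (Asub m)ᵀ)⁻¹ * Asub m * Fᵀ
    let σ2 : Fin L → ℝ := fun m =>
      ((Nm m).mulVec (F.mulVec (fun j => AR m j))) ⬝ᵥ
        ((Nm m).mulVec (F.mulVec (fun j => AR m j)))
    ∑ m, (1 / 2 : ℝ) * Real.log (d (π m) / σ2 m)
      = (1 / 2 : ℝ) * Real.log ((1 + H * Matrix.diagonal d * Hᵀ).det) := by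
  intro AR Asub Nm σ2
  set D : Matrix (Fin L) (Fin L) ℝ := Matrix.diagonal d with hD
  have hDpd : D.PosDef := Matrix.PosDef.diagonal hd
  have hDdet : D.det = ∏ i, d i := det_diagonal
  have hDdet_pos : 0 < D.det := hDpd.det_pos
  -- Fᵀ F pos def
  have hHtH : (Hᵀ * H).PosSemidef := by
    have := posSemidef_conjTranspose_mul_self H
    rwa [conjTranspose_eq_transpose_of_trivial] at this
  have hsum : ((Matrix.diagonal d)⁻¹ + Hᵀ * H).PosDef := hDpd.inv.add_posSemidef hHtH
  have hS : (Fᵀ * F).PosDef := by rw [hF]; exact hsum.inv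
  -- AR determinant
  have hdetAR : AR.det = ((A.det : ℤ) : ℝ) := (RingHom.map_det (Int.castRingHom ℝ) A).symm
  have hdetARsq : AR.det * AR.det = 1 := by
    rcases hA with h | h <;> rw [hdetAR, h] <;> norm_num
  have hARunit : IsUnit AR.det := by
    rcases hA with h | h <;> rw [hdetAR, h] <;> norm_num
  -- Gram matrix
  set G : Matrix (Fin L) (Fin L) ℝ := AR * (Fᵀ * F) * ARᵀ with hG
  have hGpd : G.PosDef := posDef_conj hS hARunit
  have hdetG : G.det = (Fᵀ * F).det := by
    rw [hG, det_mul, det_mul, det_transpose, mul_comm AR.det, mul_assoc, hdetARsq, mul_one]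
  -- σ2 = schurVal
  have hσ : ∀ m : Fin L, σ2 m = schurVal G m := fun m => sigma_eq F AR hGpd m
  have hσpos : ∀ m : Fin L, 0 < σ2 m := fun m => (hσ m) ▸ schurVal_pos G hGpd m
  have hprod : ∏ m, σ2 m = G.det := by
    rw [det_eq_prod_schurVal G hGpd]
    exact Finset.prod_congr rfl fun m _ => hσ m
  -- determinant identity
  set X : ℝ := (1 + H * Matrix.diagonal d * Hᵀ).det with hX
  have hXpos : 0 < X := by
    have hpsd : (H * D * Hᵀ).PosSemidef := by
      have := hDpd.posSemidef.mul_mul_conjTranspose_same H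
      rwa [conjTranspose_eq_transpose_of_trivial] at this
    exact (Matrix.PosDef.one.add_posSemidef hpsd).det_pos
  have hXdet : X = ((Matrix.diagonal d)⁻¹ + Hᵀ * H).det * D.det := by
    have h1 : (1 + H * Matrix.diagonal d * Hᵀ) = 1 + (H * D) * Hᵀ := rfl
    have h2 : X = (1 + Hᵀ * (H * D)).det := by
      rw [hX, h1, det_one_add_mul_comm]
    have h3 : (1 : Matrix (Fin L) (Fin L) ℝ) + Hᵀ * (H * D)
        = ((Matrix.diagonal d)⁻¹ + Hᵀ * H) * D := by
      rw [Matrix.add_mul, ← hD, Matrix.nonsing_inv_mul D hDdet_pos.ne'.isUnit, ← Matrix.mul_assoc]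
    rw [h2, h3, det_mul]
  have hdetFF : (Fᵀ * F).det = (∏ i, d i) / X := by
    have hApos : 0 < ((Matrix.diagonal d)⁻¹ + Hᵀ * H).det := hsum.det_pos
    have hppos : 0 < ∏ i, d i := Finset.prod_pos fun i _ => hd i
    rw [hF, det_nonsing_inv, Ring.inverse_eq_inv', hXdet, hDdet,
      eq_div_iff (mul_pos hApos hppos).ne', ← mul_assoc,
      inv_mul_cancel₀ hApos.ne', one_mul]
  -- log computation
  have hGdet_pos : 0 < G.det := hGpd.det_pos
  calc ∑ m, (1 / 2 : ℝ) * Real.log (d (π m) / σ2 m)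
      = (1 / 2 : ℝ) * ∑ m, (Real.log (d (π m)) - Real.log (σ2 m)) := by
        rw [Finset.mul_sum]
        refine Finset.sum_congr rfl fun m _ => ?_
        rw [Real.log_div (hd (π m)).ne' (hσpos m).ne']
    _ = (1 / 2 : ℝ) * (Real.log (∏ i, d i) - Real.log (∏ m, σ2 m)) := by
        rw [Finset.sum_sub_distrib, Equiv.sum_comp π (fun i => Real.log (d i)),
          ← Real.log_prod (fun i _ => (hd i).ne'),
          ← Real.log_prod (fun i _ => (hσpos i).ne')]
    _ = (1 / 2 : ℝ) * Real.log X := by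
        have hppos : 0 < ∏ i, d i := Finset.prod_pos fun i _ => hd i
        rw [hprod, hdetG, hdetFF,
          ← Real.log_div hppos.ne' (div_pos hppos hXpos).ne']
        congr 1
        rw [div_div_eq_mul_div, mul_comm, mul_div_assoc, div_self hppos.ne', mul_one]
end

section
/- Let P = diag(P₁,…,P_L) be positive definite, H ∈ ℝ^{N×L}, F with FᵀF = (P⁻¹+HᵀH)⁻¹, and let a₁*,…,a_L* ∈ ℤ^L be linearly independent integer vectors achieving the successive minima of the lattice Fℤ^L, i.e. ‖Fa_m*‖ = λ_m. Then for any permutation π, Σ_{ℓ=1}^L (1/2) log(P_ℓ / ‖F a*_{π(ℓ)}‖²) ≥ (1/2) log det(I + H P Hᵀ) − (L/2) log L. -/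
open Matrix

section Helpers

open MeasureTheory
open scoped RealInnerProductSpace

lemma cast_single {n : ℕ} (i : Fin n) :
    (fun j => (((Pi.single i 1 : Fin n → ℤ)) j : ℝ)) = Pi.single i 1 := by
  ext j; simp [Pi.single_apply]

lemma cube_lemma {n : ℕ} (M : Matrix (Fin n) (Fin n) ℝ) (hM : IsUnit M.det) {c : ℝ} (hc : 0 < c)
    (h : ∀ z : Fin n → ℤ, z ≠ 0 → ∃ i, c ≤ |M.mulVec (fun j => (z j : ℝ)) i|) :
    c ^ n ≤ |M.det| := by
  by_contra hlt
  push_neg at hlt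
  classical
  have hMinv : Invertible M := M.invertibleOfIsUnitDet hM
  set e : (Fin n → ℝ) ≃ₗ[ℝ] (Fin n → ℝ) := M.toLinearEquiv' hMinv with he
  have he_apply : ∀ v, e v = M.mulVec v := fun v => rfl
  set b : Module.Basis (Fin n) ℝ (Fin n → ℝ) := (Pi.basisFun ℝ (Fin n)).map e with hb
  have hb_apply : ∀ i, b i = M.mulVec (Pi.single i 1) := by
    intro i
    simp [hb, he_apply]
  -- membership in the ℤ-span
  have hmem : ∀ x ∈ Submodule.span ℤ (Set.range b),
      ∃ z : Fin n → ℤ, x = M.mulVec (fun j => (z j : ℝ)) := by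
    intro x hx
    induction hx using Submodule.span_induction with
    | mem x hx =>
      obtain ⟨i, rfl⟩ := hx
      exact ⟨Pi.single i 1, by rw [cast_single, hb_apply]⟩
    | zero =>
      refine ⟨0, ?_⟩
      have : (fun j => (((0 : Fin n → ℤ)) j : ℝ)) = 0 := by ext j; simp
      rw [this, Matrix.mulVec_zero]
    | add x y _ _ hx hy =>
      obtain ⟨z1, rfl⟩ := hx
      obtain ⟨z2, rfl⟩ := hy
      refine ⟨z1 + z2, ?_⟩
      have : (fun j => (((z1 + z2 : Fin n → ℤ)) j : ℝ))
          = (fun j => ((z1 j : ℝ))) + (fun j => ((z2 j : ℝ))) := by ext j; push_cast; simp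
      rw [this, Matrix.mulVec_add]
    | smul a x _ hx =>
      obtain ⟨z, rfl⟩ := hx
      refine ⟨a • z, ?_⟩
      have : (fun j => (((a • z : Fin n → ℤ)) j : ℝ))
          = (a : ℝ) • (fun j => ((z j : ℝ))) := by ext j; push_cast; simp
      rw [this, Matrix.mulVec_smul, Int.cast_smul_eq_zsmul]
  set s : Set (Fin n → ℝ) := Set.univ.pi (fun _ => Set.Ioo (-c) c) with hs
  have hconv : Convex ℝ s := convex_pi (fun i _ => convex_Ioo _ _)
  have hsymm : ∀ x ∈ s, -x ∈ s := by
    intro x hx i _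
    have := hx i (Set.mem_univ i)
    simp only [Set.mem_Ioo] at this ⊢
    constructor <;> simp <;> linarith [this.1, this.2]
  have fund := ZSpan.isAddFundamentalDomain' b volume
  have hofb : (Matrix.of ⇑b) = Mᵀ := by
    ext i j
    have : b i j = M.mulVec (Pi.single i 1) j := by rw [hb_apply]
    simpa [Matrix.mulVec_single] using this
  have hvolF : volume (ZSpan.fundamentalDomain b) = ENNReal.ofReal |M.det| := by
    rw [ZSpan.volume_fundamentalDomain, hofb, Matrix.det_transpose]
  have hvols : volume s = ENNReal.ofReal ((2 * c) ^ n) := by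
    rw [hs, volume_pi_pi]
    simp only [Real.volume_Ioo]
    rw [Finset.prod_const, ENNReal.ofReal_pow (by linarith)]
    congr 2
    · ring
    · simp
  have hmeas : volume (ZSpan.fundamentalDomain b) * 2 ^ Module.finrank ℝ (Fin n → ℝ)
      < volume s := by
    rw [hvolF, hvols]
    have hfr : Module.finrank ℝ (Fin n → ℝ) = n := by simp
    rw [hfr]
    calc ENNReal.ofReal |M.det| * 2 ^ n
        = ENNReal.ofReal (|M.det| * 2 ^ n) := by
          rw [ENNReal.ofReal_mul (abs_nonneg _)]
          congr 1
          rw [ENNReal.ofReal_pow (by norm_num : (0:ℝ) ≤ 2)]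
          norm_num
      _ < ENNReal.ofReal ((2 * c) ^ n) := by
          rw [ENNReal.ofReal_lt_ofReal_iff (by positivity)]
          rw [mul_pow]
          rw [mul_comm]
          exact mul_lt_mul_of_pos_left hlt (by positivity)
  have hcnt : Countable ↥(Submodule.span ℤ (Set.range ⇑b)).toAddSubgroup := by
    have hsurj : Function.Surjective (fun z : Fin n → ℤ =>
        (⟨∑ i, z i • b i, Submodule.sum_mem _ (fun i _ => Submodule.smul_mem _ _
          (Submodule.subset_span ⟨i, rfl⟩))⟩ :
          ↥(Submodule.span ℤ (Set.range ⇑b)).toAddSubgroup)) := by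
      rintro ⟨x, hx⟩
      obtain ⟨c, hc⟩ := (Submodule.mem_span_range_iff_exists_fun ℤ).mp hx
      exact ⟨c, Subtype.ext hc⟩
    exact hsurj.countable
  obtain ⟨x, hx0, hxs⟩ :=
    exists_ne_zero_mem_lattice_of_measure_mul_two_pow_lt_measure fund hsymm hconv hmeas
  obtain ⟨z, hz⟩ := hmem x x.2
  have hzne : z ≠ 0 := by
    rintro rfl
    apply hx0
    have : (x : Fin n → ℝ) = 0 := by
      rw [hz]
      have : (fun j => (((0 : Fin n → ℤ)) j : ℝ)) = 0 := by ext j; simp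
      rw [this, Matrix.mulVec_zero]
    exact Subtype.ext this
  obtain ⟨i, hi⟩ := h z hzne
  have := hxs i (Set.mem_univ i)
  rw [hz] at this
  simp only [Set.mem_Ioo] at this
  have : |M.mulVec (fun j => (z j : ℝ)) i| < c := abs_lt.mpr this
  linarith



lemma minkowski2 {n : ℕ} (hn : 0 < n) (F : Matrix (Fin n) (Fin n) ℝ) (hF : IsUnit F.det)
    (lam : Fin n → ℝ) (hpos : ∀ m, 0 < lam m) (hmono : Monotone lam)
    (b : Fin n → (Fin n → ℝ))
    (hbnorm : ∀ m, Real.sqrt (b m ⬝ᵥ b m) = lam m)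
    (hmin : ∀ (k : Fin n) (v : Fin n → ℝ), (∃ z : Fin n → ℤ, v = F.mulVec fun j => (z j : ℝ)) →
       v ∉ Submodule.span ℝ (b '' {i : Fin n | i < k}) → lam k ≤ Real.sqrt (v ⬝ᵥ v)) :
    ∏ m, (lam m) ^ 2 ≤ (n : ℝ) ^ n * |F.det| ^ 2 := by
  classical
  haveI i1 : WellFoundedLT (Fin n) := inferInstance
  set E := EuclideanSpace ℝ (Fin n)
  have hcard : Module.finrank ℝ E = Fintype.card (Fin n) := by simp [E]
  set toE : (Fin n → ℝ) → E := fun w => WithLp.toLp 2 w with htoE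
  set bE : Fin n → E := fun i => toE (b i) with hbE
  set u : OrthonormalBasis (Fin n) ℝ E := InnerProductSpace.gramSchmidtOrthonormalBasis (𝕜 := ℝ) hcard bE with hu
  -- inner products
  have hinner : ∀ (x : E) (y : E), ⟪x, y⟫ = ∑ j, x j * y j := by
    intro x y
    rw [PiLp.inner_apply]
    simp [RCLike.inner_apply, mul_comm]
  have htri : ∀ i k : Fin n, i < k → ⟪u k, bE i⟫ = 0 := by
    intro i k hik
    exact InnerProductSpace.gramSchmidtOrthonormalBasis_inv_triangular hcard bE hik
  set top : Fin n := ⟨n - 1, by omega⟩ with htop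
  have hletop : ∀ i : Fin n, lam i ≤ lam top := by
    intro i
    refine hmono ?_
    rw [Fin.le_def]
    have := i.isLt
    simp only [htop]
    omega
  set A : Matrix (Fin n) (Fin n) ℝ := Matrix.of (fun i j => (lam top / lam i) * (u i) j) with hA
  have hAmul : ∀ v : Fin n → ℝ, A.mulVec v = fun i => (lam top / lam i) * ⟪u i, toE v⟫ := by
    intro v
    ext i
    rw [hinner]
    simp [hA, Matrix.mulVec, dotProduct, Finset.mul_sum, mul_assoc, htoE]
  have hdetA : |A.det| = ∏ i, (lam top / lam i) := by
    set U : Matrix (Fin n) (Fin n) ℝ := Matrix.of (fun i j => (u i) j) with hU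
    have hAU : A = Matrix.diagonal (fun i => lam top / lam i) * U := by
      ext i j
      simp [hA, hU, Matrix.diagonal_mul]
    have hUU : U * Uᵀ = 1 := by
      ext i k
      have : ⟪u i, u k⟫ = if i = k then (1:ℝ) else 0 :=
        orthonormal_iff_ite.mp u.orthonormal i k
      rw [hinner] at this
      simp only [Matrix.mul_apply, Matrix.transpose_apply, hU, Matrix.of_apply]
      rw [this, Matrix.one_apply]
    have hdetU : U.det = 1 ∨ U.det = -1 := by
      apply mul_self_eq_one_iff.mp
      have := congrArg Matrix.det hUU
      rwa [Matrix.det_mul, Matrix.det_transpose, Matrix.det_one] at this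
    have habsU : |U.det| = 1 := by rcases hdetU with h | h <;> simp [h]
    rw [hAU, Matrix.det_mul, abs_mul, Matrix.det_diagonal, habsU, mul_one]
    rw [abs_of_pos (Finset.prod_pos (fun i _ => div_pos (hpos top) (hpos i)))]
  -- Parseval
  have hnormsq : ∀ w : E, ‖w‖ ^ 2 = ∑ j, w j ^ 2 := by
    intro w
    rw [EuclideanSpace.norm_eq, Real.sq_sqrt (Finset.sum_nonneg (fun j _ => sq_nonneg _))]
    simp [sq_abs]
  have hpars : ∀ v : Fin n → ℝ, v ⬝ᵥ v = ∑ i, ⟪u i, toE v⟫ ^ 2 := by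
    intro v
    have h1 : v ⬝ᵥ v = ‖toE v‖ ^ 2 := by
      rw [hnormsq]
      simp [dotProduct, sq, htoE]
    have h2 : ‖toE v‖ = ‖u.repr (toE v)‖ := (u.repr.norm_map (toE v)).symm
    rw [h1, h2, hnormsq]
    congr 1
    ext i
    rw [u.repr_apply_apply]
  -- key coordinate bound
  have hFinv : Invertible F := F.invertibleOfIsUnitDet hF
  have hkey : ∀ z : Fin n → ℤ, z ≠ 0 →
      (lam top) ^ 2 ≤ ∑ i, ((A * F).mulVec (fun j => (z j : ℝ)) i) ^ 2 := by
    intro z hz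
    set v : Fin n → ℝ := F.mulVec (fun j => (z j : ℝ)) with hv
    have hvne : v ≠ 0 := by
      intro h0
      apply hz
      have h1 : (fun j => (z j : ℝ)) = 0 := by
        have h2 : (⅟F * F) *ᵥ (fun j => (z j : ℝ)) = 0 := by
          rw [← Matrix.mulVec_mulVec, ← hv, h0, Matrix.mulVec_zero]
        rwa [invOf_mul_self, Matrix.one_mulVec] at h2
      ext j
      have := congrFun h1 j
      simpa using this
    -- the coefficients
    set cf : Fin n → ℝ := fun i => ⟪u i, toE v⟫ with hcf
    have hrepr : ∀ i, u.repr (toE v) i = cf i := fun i => u.repr_apply_apply (toE v) i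
    have hTne : (Finset.univ.filter (fun i => cf i ≠ 0)).Nonempty := by
      rw [Finset.filter_nonempty_iff]
      by_contra hall
      push_neg at hall
      apply hvne
      have : u.repr (toE v) = 0 := by
        ext i
        rw [hrepr i]
        exact hall i (Finset.mem_univ i)
      have := u.repr.injective (by rw [this, map_zero] : u.repr (toE v) = u.repr 0)
      exact congrArg WithLp.ofLp this
    set k : Fin n := (Finset.univ.filter (fun i => cf i ≠ 0)).max' hTne with hk
    have hck : cf k ≠ 0 := by
      have := (Finset.univ.filter (fun i => cf i ≠ 0)).max'_mem hTne
      rw [Finset.mem_filter] at this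
      exact this.2
    have hgt : ∀ i : Fin n, k < i → cf i = 0 := by
      intro i hi
      by_contra hne
      have : i ∈ Finset.univ.filter (fun i => cf i ≠ 0) := by
        rw [Finset.mem_filter]; exact ⟨Finset.mem_univ i, hne⟩
      exact absurd (Finset.le_max' _ i this) (not_le.mpr hi)
    have hnotspan : v ∉ Submodule.span ℝ (b '' {i : Fin n | i < k}) := by
      intro hvm
      apply hck
      have : ∀ w ∈ Submodule.span ℝ (b '' {i : Fin n | i < k}), ⟪u k, toE w⟫ = (0:ℝ) := by
        intro w hw
        induction hw using Submodule.span_induction with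
        | mem w hw =>
          obtain ⟨i, hi, rfl⟩ := hw
          exact htri i k hi
        | zero => exact inner_zero_right _
        | add x y _ _ hx hy =>
          have : toE (x + y) = toE x + toE y := rfl
          rw [this, inner_add_right, hx, hy, add_zero]
        | smul a x _ hx =>
          have : toE (a • x) = a • toE x := rfl
          rw [this, inner_smul_right, hx, mul_zero]
      exact this v hvm
    have hlamk : lam k ≤ Real.sqrt (v ⬝ᵥ v) := hmin k v ⟨z, hv⟩ hnotspan
    have hvv : lam k ^ 2 ≤ v ⬝ᵥ v := by
      have hnn : 0 ≤ v ⬝ᵥ v := by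
        simp only [dotProduct]
        exact Finset.sum_nonneg (fun j _ => mul_self_nonneg _)
      nlinarith [Real.sq_sqrt hnn, hpos k, Real.sqrt_nonneg (v ⬝ᵥ v)]
    have hterm : ∀ i : Fin n, (lam top / lam k) ^ 2 * cf i ^ 2
        ≤ ((lam top / lam i) * cf i) ^ 2 := by
      intro i
      by_cases hci : cf i = 0
      · simp [hci]
      · have hik : i ≤ k := by
          by_contra hgti
          exact hci (hgt i (not_le.mp hgti))
        have h1 : lam top / lam k ≤ lam top / lam i :=
          div_le_div_of_nonneg_left (le_of_lt (hpos top)) (hpos i) (hmono hik)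
        have h2 : 0 < lam top / lam k := div_pos (hpos top) (hpos k)
        rw [mul_pow]
        have : (lam top / lam k) ^ 2 ≤ (lam top / lam i) ^ 2 := by nlinarith
        exact mul_le_mul_of_nonneg_right this (sq_nonneg _)
    calc (lam top) ^ 2 = (lam top / lam k) ^ 2 * (lam k) ^ 2 := by
          rw [div_pow, div_mul_cancel₀ _ (pow_ne_zero 2 (ne_of_gt (hpos k)))]
      _ ≤ (lam top / lam k) ^ 2 * (v ⬝ᵥ v) := by
          apply mul_le_mul_of_nonneg_left hvv (sq_nonneg _)
      _ = ∑ i, (lam top / lam k) ^ 2 * cf i ^ 2 := by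
          rw [hpars v, Finset.mul_sum]
      _ ≤ ∑ i, ((lam top / lam i) * cf i) ^ 2 := Finset.sum_le_sum (fun i _ => hterm i)
      _ = ∑ i, ((A * F).mulVec (fun j => (z j : ℝ)) i) ^ 2 := by
          apply Finset.sum_congr rfl
          intro i _
          rw [← Matrix.mulVec_mulVec, ← hv, hAmul v]
  -- apply cube lemma
  have hdet : |(A * F).det| = (∏ i, (lam top / lam i)) * |F.det| := by
    rw [Matrix.det_mul, abs_mul, hdetA]
  have hsqn : (0:ℝ) < Real.sqrt n := Real.sqrt_pos.mpr (by exact_mod_cast hn)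
  set c : ℝ := lam top / Real.sqrt n with hc
  have hcpos : 0 < c := div_pos (hpos top) hsqn
  have hunit : IsUnit (A * F).det := by
    rw [isUnit_iff_ne_zero, Matrix.det_mul]
    apply mul_ne_zero
    · intro h0
      have : |A.det| = 0 := by rw [h0, abs_zero]
      rw [hdetA] at this
      have : (0:ℝ) < ∏ i, lam top / lam i :=
        Finset.prod_pos (fun i _ => div_pos (hpos top) (hpos i))
      linarith
    · exact (isUnit_iff_ne_zero.mp hF)
  have hcoord : ∀ z : Fin n → ℤ, z ≠ 0 →
      ∃ i, c ≤ |(A * F).mulVec (fun j => (z j : ℝ)) i| := by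
    intro z hz
    by_contra hall
    push_neg at hall
    have hlt : ∑ i, ((A * F).mulVec (fun j => (z j : ℝ)) i) ^ 2 < (lam top) ^ 2 := by
      have h1 : ∀ i : Fin n, ((A * F).mulVec (fun j => (z j : ℝ)) i) ^ 2 < c ^ 2 := by
        intro i
        have := hall i
        nlinarith [abs_nonneg ((A * F).mulVec (fun j => (z j : ℝ)) i),
          sq_abs ((A * F).mulVec (fun j => (z j : ℝ)) i)]
      calc ∑ i, ((A * F).mulVec (fun j => (z j : ℝ)) i) ^ 2
          < ∑ _i : Fin n, c ^ 2 := by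
            apply Finset.sum_lt_sum_of_nonempty
            · exact Finset.univ_nonempty_iff.mpr (Fin.pos_iff_nonempty.mp hn)
            · exact fun i _ => h1 i
        _ = n * c ^ 2 := by rw [Finset.sum_const, Finset.card_univ, Fintype.card_fin,
            nsmul_eq_mul]
        _ = (lam top) ^ 2 := by
            rw [hc, div_pow, Real.sq_sqrt (Nat.cast_nonneg n)]
            field_simp
    exact absurd (hkey z hz) (not_le.mpr hlt)
  have hcube := cube_lemma (A * F) hunit hcpos hcoord
  rw [hdet] at hcube
  have hprodpos : (0:ℝ) < ∏ i, lam i := Finset.prod_pos (fun i _ => hpos i)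
  have hprodd : (∏ i, (lam top / lam i)) = lam top ^ n / ∏ i, lam i := by
    rw [Finset.prod_div_distrib, Finset.prod_const, Finset.card_univ, Fintype.card_fin]
  have hcn : c ^ n = lam top ^ n / (Real.sqrt n) ^ n := by rw [hc, div_pow]
  rw [hcn, hprodd] at hcube
  have h3 : ∏ i, lam i ≤ (Real.sqrt n) ^ n * |F.det| := by
    have hltn : (0:ℝ) < lam top ^ n := pow_pos (hpos top) n
    have hsqnn : (0:ℝ) < (Real.sqrt n) ^ n := pow_pos hsqn n
    rw [div_mul_eq_mul_div, div_le_div_iff₀ hsqnn hprodpos] at hcube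
    have := hcube
    nlinarith
  calc ∏ m, (lam m) ^ 2 = (∏ m, lam m) ^ 2 := by rw [← Finset.prod_pow]
    _ ≤ ((Real.sqrt n) ^ n * |F.det|) ^ 2 := by
        apply pow_le_pow_left₀ (le_of_lt hprodpos) h3
    _ = (n:ℝ) ^ n * |F.det| ^ 2 := by
        rw [mul_pow, ← pow_mul, mul_comm n 2, pow_mul, Real.sq_sqrt (Nat.cast_nonneg n)]


end Helpers

theorem stmt_11 {L N : ℕ} (d : Fin L → ℝ) (hd : ∀ i, 0 < d i)
    (H : Matrix (Fin N) (Fin L) ℝ) (F : Matrix (Fin L) (Fin L) ℝ)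
    (hF : Fᵀ * F = ((Matrix.diagonal d)⁻¹ + Hᵀ * H)⁻¹)
    (astar : Fin L → (Fin L → ℤ))
    (hind : LinearIndependent ℝ (fun m => fun j => ((astar m j : ℝ))))
    (hmin : ∀ m : Fin L,
      Real.sqrt ((F.mulVec fun j => ((astar m j : ℝ))) ⬝ᵥ
          (F.mulVec fun j => ((astar m j : ℝ))))
        = sInf {r : ℝ | ∃ w : Fin (m.val + 1) → (Fin L → ℝ),
            (∀ i, ∃ z : Fin L → ℤ, w i = F.mulVec (fun j => (z j : ℝ))) ∧
            LinearIndependent ℝ w ∧ ∀ i, Real.sqrt (w i ⬝ᵥ w i) ≤ r})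
    (π : Equiv.Perm (Fin L)) :
    ∑ ℓ, (1 / 2 : ℝ) * Real.log (d ℓ /
        ((F.mulVec fun j => ((astar (π ℓ) j : ℝ))) ⬝ᵥ
          (F.mulVec fun j => ((astar (π ℓ) j : ℝ)))))
      ≥ (1 / 2 : ℝ) * Real.log ((1 + H * Matrix.diagonal d * Hᵀ).det)
        - (L : ℝ) / 2 * Real.log L := by
  classical
  rcases Nat.eq_zero_or_pos L with hL0 | hL
  · subst hL0
    have h0 : H * Matrix.diagonal d * Hᵀ = 0 := by
      ext i j
      simp [Matrix.mul_apply]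
    rw [h0, add_zero, Matrix.det_one, Real.log_one]
    simp
  -- main case
  set G := (Matrix.diagonal d)⁻¹ + Hᵀ * H with hG
  have hdet_d : (0:ℝ) < ∏ i, d i := Finset.prod_pos fun i _ => hd i
  have hdiag_unit : IsUnit (Matrix.diagonal d).det := by
    rw [Matrix.det_diagonal]
    exact isUnit_iff_ne_zero.mpr (ne_of_gt hdet_d)
  have hdiag_inv : (Matrix.diagonal d)⁻¹ = Matrix.diagonal (fun i => (d i)⁻¹) := by
    apply Matrix.inv_eq_right_inv
    rw [Matrix.diagonal_mul_diagonal]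
    have : (fun i => d i * (d i)⁻¹) = fun _ => (1:ℝ) := by
      ext i
      exact mul_inv_cancel₀ (ne_of_gt (hd i))
    rw [this, Matrix.diagonal_one]
  have hGpos : G.PosDef := by
    rw [hG, hdiag_inv]
    apply Matrix.PosDef.add_posSemidef
    · exact Matrix.posDef_diagonal_iff.mpr (fun i => inv_pos.mpr (hd i))
    · have h1 := Matrix.posSemidef_conjTranspose_mul_self H
      have h2 : Hᴴ = Hᵀ := by
        ext i j
        simp [Matrix.conjTranspose_apply]
      rwa [h2] at h1
  have hGdet : 0 < G.det := hGpos.det_pos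
  have hFdet2 : F.det ^ 2 = G.det⁻¹ := by
    have h1 := congrArg Matrix.det hF
    rwa [Matrix.det_mul, Matrix.det_transpose, ← sq, Matrix.det_nonsing_inv,
      Ring.inverse_eq_inv'] at h1
  have hFunit : IsUnit F.det := by
    rw [isUnit_iff_ne_zero]
    intro h0
    rw [h0] at hFdet2
    have := hFdet2.symm
    simp only [ne_eq, OfNat.ofNat_ne_zero, not_false_eq_true, zero_pow] at this
    have h1 : G.det⁻¹ > 0 := inv_pos.mpr hGdet
    rw [← hFdet2] at h1
    simp at h1
  have hFinv : Invertible F := F.invertibleOfIsUnitDet hFunit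
  set b : Fin L → (Fin L → ℝ) := fun m => F.mulVec (fun j => (astar m j : ℝ)) with hb
  set lam : Fin L → ℝ := fun m => Real.sqrt (b m ⬝ᵥ b m) with hlam
  have hb_ind : LinearIndependent ℝ b := by
    have hinj : Function.Injective (Matrix.mulVecLin F) := by
      intro x y hxy
      have h1 : (⅟F * F) *ᵥ x = (⅟F * F) *ᵥ y := by
        rw [← Matrix.mulVec_mulVec, ← Matrix.mulVec_mulVec]
        exact congrArg (fun w => (⅟F) *ᵥ w) hxy
      rwa [invOf_mul_self, Matrix.one_mulVec, Matrix.one_mulVec] at h1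
    exact hind.map' (Matrix.mulVecLin F) (LinearMap.ker_eq_bot.mpr hinj)
  have hq_pos : ∀ m, 0 < b m ⬝ᵥ b m := by
    intro m
    have hne : b m ≠ 0 := hb_ind.ne_zero m
    have h1 : b m ⬝ᵥ b m ≠ 0 := fun h => hne (dotProduct_self_eq_zero.mp h)
    have h2 : 0 ≤ b m ⬝ᵥ b m := Finset.sum_nonneg (fun j _ => mul_self_nonneg _)
    exact lt_of_le_of_ne h2 (Ne.symm h1)
  have hlam_pos : ∀ m, 0 < lam m := fun m => Real.sqrt_pos.mpr (hq_pos m)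
  have hlam_sq : ∀ m, lam m ^ 2 = b m ⬝ᵥ b m := fun m => Real.sq_sqrt (le_of_lt (hq_pos m))
  -- the sets of the successive-minima characterization
  set Sset : Fin L → Set ℝ := fun m => {r : ℝ | ∃ w : Fin (m.val + 1) → (Fin L → ℝ),
      (∀ i, ∃ z : Fin L → ℤ, w i = F.mulVec (fun j => (z j : ℝ))) ∧
      LinearIndependent ℝ w ∧ ∀ i, Real.sqrt (w i ⬝ᵥ w i) ≤ r} with hSset
  have hmin' : ∀ m, lam m = sInf (Sset m) := fun m => hmin m
  have hbdd : ∀ m, BddBelow (Sset m) := by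
    intro m
    refine ⟨0, ?_⟩
    rintro r ⟨w, -, -, hr⟩
    exact le_trans (Real.sqrt_nonneg _) (hr 0)
  have lam_le : ∀ (m : Fin L) (w : Fin (m.val + 1) → (Fin L → ℝ)),
      (∀ i, ∃ z : Fin L → ℤ, w i = F.mulVec (fun j => (z j : ℝ))) →
      LinearIndependent ℝ w → ∀ r : ℝ, (∀ i, Real.sqrt (w i ⬝ᵥ w i) ≤ r) → lam m ≤ r := by
    intro m w hlat hli r hr
    rw [hmin' m]
    exact csInf_le (hbdd m) ⟨w, hlat, hli, hr⟩
  have lam_mono : Monotone lam := by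
    intro m m' hmm'
    rw [hmin' m, hmin' m']
    apply csInf_le_csInf (hbdd m)
    · -- nonempty
      have hLm' : m'.val + 1 ≤ L := m'.isLt
      set emb : Fin (m'.val + 1) → Fin L := fun i => ⟨i.val, by omega⟩ with hemb
      have hembinj : Function.Injective emb := by
        intro i j hij
        have : (emb i).val = (emb j).val := congrArg Fin.val hij
        exact Fin.ext this
      refine ⟨Finset.univ.sup' Finset.univ_nonempty
        (fun i => Real.sqrt ((b (emb i)) ⬝ᵥ (b (emb i)))), ?_⟩
      exact ⟨fun i => b (emb i), fun i => ⟨astar (emb i), rfl⟩, hb_ind.comp emb hembinj,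
        fun i => Finset.le_sup' (fun t => Real.sqrt ((b (emb t)) ⬝ᵥ (b (emb t))))
          (Finset.mem_univ i)⟩
    · -- inclusion
      rintro r ⟨w, hlat, hli, hr⟩
      have hle : m.val + 1 ≤ m'.val + 1 := by
        have : m.val ≤ m'.val := hmm'
        omega
      exact ⟨fun i => w (Fin.castLE hle i), fun i => hlat _,
        hli.comp _ (Fin.castLE_injective hle), fun i => hr _⟩
  have hminM : ∀ (k : Fin L) (v : Fin L → ℝ),
      (∃ z : Fin L → ℤ, v = F.mulVec fun j => (z j : ℝ)) →
      v ∉ Submodule.span ℝ (b '' {i : Fin L | i < k}) → lam k ≤ Real.sqrt (v ⬝ᵥ v) := by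
    intro k v hvz hvspan
    by_contra hcon
    push_neg at hcon
    set T : Finset (Fin L) := Finset.univ.filter (fun j => lam k ≤ lam j) with hT
    have hkT : k ∈ T := by
      rw [hT, Finset.mem_filter]
      exact ⟨Finset.mem_univ k, le_refl _⟩
    have hTne : T.Nonempty := ⟨k, hkT⟩
    set j : Fin L := T.min' hTne with hj
    have hjk : j ≤ k := Finset.min'_le T k hkT
    have hlamj : lam k ≤ lam j := by
      have h0 := T.min'_mem hTne
      have h2 : j ∈ Finset.univ.filter (fun j' => lam k ≤ lam j') := by
        rw [← hT]; exact h0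
      exact (Finset.mem_filter.mp h2).2
    have hlt : ∀ i : Fin L, i < j → lam i < lam k := by
      intro i hij
      by_contra hle
      push_neg at hle
      have hiT : i ∈ T := by
        rw [hT, Finset.mem_filter]
        exact ⟨Finset.mem_univ i, hle⟩
      exact absurd (Finset.min'_le T i hiT) (not_le.mpr hij)
    set emb : Fin j.val → Fin L := fun i => ⟨i.val, lt_trans i.isLt j.isLt⟩ with hemb
    have hembj : ∀ i : Fin j.val, emb i < j := fun i => i.isLt
    have hembinj : Function.Injective emb := by
      intro i i' hii
      have : (emb i).val = (emb i').val := congrArg Fin.val hii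
      exact Fin.ext this
    set w : Fin (j.val + 1) → (Fin L → ℝ) := Fin.snoc (fun i => b (emb i)) v with hw
    have hwlat : ∀ i, ∃ z : Fin L → ℤ, w i = F.mulVec (fun t => (z t : ℝ)) := by
      intro i
      refine Fin.lastCases ?_ ?_ i
      · obtain ⟨z, hz⟩ := hvz
        exact ⟨z, by rw [hw, Fin.snoc_last]; exact hz⟩
      · intro i'
        exact ⟨astar (emb i'), by rw [hw, Fin.snoc_castSucc]⟩
    have hwind : LinearIndependent ℝ w := by
      rw [hw]
      apply linearIndependent_fin_snoc.mpr
      constructor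
      · exact hb_ind.comp emb hembinj
      · intro hvmem
        apply hvspan
        refine Submodule.span_mono ?_ hvmem
        rintro x ⟨i, rfl⟩
        exact ⟨emb i, lt_of_lt_of_le (hembj i) hjk, rfl⟩
    set r : ℝ := Finset.univ.sup' Finset.univ_nonempty
      (fun i => Real.sqrt (w i ⬝ᵥ w i)) with hr
    have h1 : lam j ≤ r := lam_le j w hwlat hwind r
      (fun i => Finset.le_sup' (fun t => Real.sqrt (w t ⬝ᵥ w t)) (Finset.mem_univ i))
    have h2 : r < lam j := by
      rw [hr]
      rw [Finset.sup'_lt_iff]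
      intro i _
      refine Fin.lastCases ?_ ?_ i
      · rw [hw, Fin.snoc_last]
        exact lt_of_lt_of_le hcon hlamj
      · intro i'
        rw [hw, Fin.snoc_castSucc]
        exact lt_of_lt_of_le (hlt (emb i') (hembj i')) hlamj
    exact absurd h1 (not_le.mpr h2)
  have hmk : ∏ m, (lam m) ^ 2 ≤ (L : ℝ) ^ L * |F.det| ^ 2 := by
    exact minkowski2 hL F hFunit lam hlam_pos lam_mono b (fun m => rfl) hminM
  rw [sq_abs, hFdet2] at hmk
  -- determinant identity
  have hdet1 : (1 + H * Matrix.diagonal d * Hᵀ).det = (∏ i, d i) * G.det := by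
    have hPinv : Matrix.diagonal d * (Matrix.diagonal d)⁻¹ = 1 :=
      Matrix.mul_nonsing_inv _ hdiag_unit
    have h2 : 1 + H * Matrix.diagonal d * Hᵀ = 1 + H * (Matrix.diagonal d * Hᵀ) := by
      rw [Matrix.mul_assoc]
    rw [h2, Matrix.det_one_add_mul_comm]
    have h3 : (1 : Matrix (Fin L) (Fin L) ℝ) + Matrix.diagonal d * Hᵀ * H
        = Matrix.diagonal d * G := by
      rw [hG, Matrix.mul_add, hPinv, Matrix.mul_assoc]
    rw [h3, Matrix.det_mul, Matrix.det_diagonal]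
  -- rewrite goal dot products
  have hgoal_eq : ∀ ℓ : Fin L, ((F.mulVec fun j => ((astar (π ℓ) j : ℝ))) ⬝ᵥ
      (F.mulVec fun j => ((astar (π ℓ) j : ℝ)))) = lam (π ℓ) ^ 2 :=
    fun ℓ => (hlam_sq (π ℓ)).symm
  simp only [hgoal_eq, hdet1]
  -- final log computation
  have hsum : ∑ ℓ, (1/2 : ℝ) * Real.log (d ℓ / lam (π ℓ) ^ 2)
      = (1/2 : ℝ) * (Real.log (∏ i, d i) - Real.log (∏ m, lam m ^ 2)) := by
    rw [← Finset.mul_sum]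
    congr 1
    have h1 : ∀ ℓ : Fin L, Real.log (d ℓ / lam (π ℓ) ^ 2)
        = Real.log (d ℓ) - Real.log (lam (π ℓ) ^ 2) := fun ℓ =>
      Real.log_div (ne_of_gt (hd ℓ)) (ne_of_gt (pow_pos (hlam_pos (π ℓ)) 2))
    rw [Finset.sum_congr rfl (fun ℓ _ => h1 ℓ), Finset.sum_sub_distrib]
    rw [Real.log_prod (fun i _ => ne_of_gt (hd i)),
      Real.log_prod (fun m _ => ne_of_gt (pow_pos (hlam_pos m) 2))]
    congr 1
    exact Equiv.sum_comp π (fun m => Real.log (lam m ^ 2))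
  rw [ge_iff_le, hsum]
  have hlogG : Real.log ((∏ i, d i) * G.det)
      = Real.log (∏ i, d i) + Real.log G.det :=
    Real.log_mul (ne_of_gt hdet_d) (ne_of_gt hGdet)
  rw [hlogG]
  have hQpos : (0:ℝ) < ∏ m, lam m ^ 2 := Finset.prod_pos fun m _ => pow_pos (hlam_pos m) 2
  have hLpos : (0:ℝ) < (L:ℝ) := by exact_mod_cast hL
  have hlogQ : Real.log (∏ m, lam m ^ 2) ≤ (L:ℝ) * Real.log L - Real.log G.det := by
    have h1 : Real.log (∏ m, lam m ^ 2) ≤ Real.log ((L:ℝ) ^ L * G.det⁻¹) :=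
      Real.log_le_log hQpos hmk
    rwa [Real.log_mul (ne_of_gt (pow_pos hLpos L)) (ne_of_gt (inv_pos.mpr hGdet)),
      Real.log_pow, Real.log_inv] at h1
  linarith
end
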